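/- arXiv:1901.01607 — 9 statements merged into one kernel-verified Lean document; each statement's English description precedes it below -/
import Mathlib

section
/- There exist functions f, g : ℝ → ℝ, both real-analytic on ℝ, both satisfying h(x+1) = h(x) + 1 and deriv h x > 0 for all x ∈ ℝ (for h = f and h = g), such that: (i) g ∘ f = f ∘ f ∘ g (so that g f g⁻¹ = f² in the group of circle diffeomorphisms); (ii) there is a point x₀ ∈ [0,1) with f x₀ = x₀, deriv f x₀ = 1, deriv (deriv f) x₀ ≠ 0; and (iii) x₀ is the unique fixed point of f in [x₀, x₀ + 1) (i.e. for x ∈ [x₀, x₀+1), f x = x implies x = x₀). -/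
open Real

lemma my_analyticAt_rsin (x : ℝ) : AnalyticAt ℝ Real.sin x := by
  have h9 : AnalyticAt ℂ Complex.sin (x : ℂ) := Complex.differentiable_sin.analyticAt _
  have h10 : AnalyticAt ℝ (fun y : ℝ => (Complex.sin (Complex.ofRealCLM y)).re) x :=
    (Complex.reCLM.analyticAt _).comp ((h9.restrictScalars).comp (Complex.ofRealCLM.analyticAt x))
  have : Real.sin = fun y : ℝ => (Complex.sin (Complex.ofRealCLM y)).re := by
    funext y
    simp [Complex.ofReal_sin y]
    rfl
  rw [this]; exact h10

lemma my_analyticAt_rcos (x : ℝ) : AnalyticAt ℝ Real.cos x := by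
  have h9 : AnalyticAt ℂ Complex.cos (x : ℂ) := Complex.differentiable_cos.analyticAt _
  have h10 : AnalyticAt ℝ (fun y : ℝ => (Complex.cos (Complex.ofRealCLM y)).re) x :=
    (Complex.reCLM.analyticAt _).comp ((h9.restrictScalars).comp (Complex.ofRealCLM.analyticAt x))
  have : Real.cos = fun y : ℝ => (Complex.cos (Complex.ofRealCLM y)).re := by
    funext y
    simp [Complex.ofReal_cos y]
    rfl
  rw [this]; exact h10

lemma my_analyticAt_arctan (x : ℝ) : AnalyticAt ℝ Real.arctan x := by
  have hden : (1 : ℂ) - (x:ℂ) * Complex.I ≠ 0 := by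
    intro h
    have := congrArg Complex.re h
    simp at this
  have harg : ((1 + (x:ℂ)*Complex.I)/(1 - (x:ℂ)*Complex.I)) ∈ Complex.slitPlane := by
    rcases eq_or_ne x 0 with h | h
    · subst h; simp [Complex.mem_slitPlane_iff]
    · rw [Complex.mem_slitPlane_iff]
      right
      rw [Complex.div_im]
      simp [Complex.normSq_apply]
      intro hcon
      have hx : (0:ℝ) < 1 + x*x := by nlinarith [sq_nonneg x]
      rw [div_sub_div_same, sub_neg_eq_add, div_eq_zero_iff] at hcon
      rcases hcon with h2 | h2
      · exact h (by linarith)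
      · exact absurd h2 hx.ne'
  have h9 : AnalyticAt ℂ Complex.arctan (x : ℂ) := by
    have : Complex.arctan = fun z : ℂ =>
        -Complex.I / 2 * Complex.log ((1 + z * Complex.I) / (1 - z * Complex.I)) := rfl
    rw [this]
    exact analyticAt_const.mul
      (((analyticAt_const.add ((analyticAt_id).mul analyticAt_const)).div
        (analyticAt_const.sub ((analyticAt_id).mul analyticAt_const)) hden).clog harg)
  have h10 : AnalyticAt ℝ (fun y : ℝ => (Complex.arctan (Complex.ofRealCLM y)).re) x :=
    (Complex.reCLM.analyticAt _).comp ((h9.restrictScalars).comp (Complex.ofRealCLM.analyticAt x))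
  have : Real.arctan = fun y : ℝ => (Complex.arctan (Complex.ofRealCLM y)).re := by
    funext y
    rw [show Complex.ofRealCLM (y:ℝ) = (y:ℂ) from rfl, ← Complex.ofReal_arctan,
      Complex.ofReal_re]
  rw [this]; exact h10

noncomputable def pf (x : ℝ) : ℝ :=
  x - (1/π) * arctan (sin (π*x)^2 / (1 + sin (π*x) * cos (π*x)))

noncomputable def pg (x : ℝ) : ℝ :=
  x - (1/π) * arctan (sin (π*x) * cos (π*x) / (1 + cos (π*x)^2))

noncomputable def Df (x : ℝ) : ℝ := 1 + sin (π*x)^2 + 2 * sin (π*x) * cos (π*x)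
noncomputable def Dg (x : ℝ) : ℝ := 1 + 3 * cos (π*x)^2

lemma sc_bound (x : ℝ) : |sin (π*x) * cos (π*x)| ≤ 1/2 := by
  have h1 := Real.abs_sin_le_one (2*(π*x))
  rw [Real.sin_two_mul, show 2*sin (π*x)*cos (π*x) = 2*(sin (π*x)*cos (π*x)) by ring,
    abs_mul, abs_two] at h1
  linarith

lemma vf_pos (x : ℝ) : 0 < 1 + sin (π*x) * cos (π*x) := by
  nlinarith [sc_bound x, abs_nonneg (sin (π*x) * cos (π*x)), neg_abs_le (sin (π*x) * cos (π*x))]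

lemma vg_pos (x : ℝ) : 0 < 1 + cos (π*x)^2 := by positivity

lemma Df_pos (x : ℝ) : 0 < Df x := by
  have h := Real.sin_sq_add_cos_sq (π*x)
  unfold Df
  nlinarith [sq_nonneg (2*sin (π*x) + cos (π*x)), sq_nonneg (sin (π*x) + cos (π*x)),
    sq_nonneg (sin (π*x)), sq_nonneg (cos (π*x))]

lemma Dg_pos (x : ℝ) : 0 < Dg x := by
  unfold Dg; positivity

lemma sin_cos_sub_arctan (θ n v : ℝ) (hv : 0 < v) :
    sin (θ - arctan (n/v)) = (sin θ * v - cos θ * n) / Real.sqrt (v^2 + n^2) ∧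
    cos (θ - arctan (n/v)) = (cos θ * v + sin θ * n) / Real.sqrt (v^2 + n^2) := by
  have hvn : (0:ℝ) < v^2 + n^2 := by positivity
  have h1 : (1 : ℝ) + (n/v)^2 = (v^2+n^2)/v^2 := by field_simp
  have h2 : Real.sqrt (1 + (n/v)^2) = Real.sqrt (v^2+n^2) / v := by
    rw [h1, Real.sqrt_div hvn.le, Real.sqrt_sq hv.le]
  have hs : (0:ℝ) < Real.sqrt (v^2+n^2) := Real.sqrt_pos.2 hvn
  constructor
  · rw [Real.sin_sub, Real.sin_arctan, Real.cos_arctan, h2]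
    field_simp
  · rw [Real.cos_sub, Real.sin_arctan, Real.cos_arctan, h2]
    field_simp

lemma pf_angle (x : ℝ) : π * pf x = π * x - arctan (sin (π*x)^2 / (1 + sin (π*x) * cos (π*x))) := by
  unfold pf
  have : π ≠ 0 := Real.pi_ne_zero
  field_simp

lemma pg_angle (x : ℝ) : π * pg x = π * x - arctan (sin (π*x) * cos (π*x) / (1 + cos (π*x)^2)) := by
  unfold pg
  have : π ≠ 0 := Real.pi_ne_zero
  field_simp

lemma sin_pf (x : ℝ) : sin (π * pf x) = sin (π*x) / Real.sqrt (Df x) := by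
  rw [pf_angle]
  obtain ⟨h, -⟩ := sin_cos_sub_arctan (π*x) (sin (π*x)^2) (1 + sin (π*x) * cos (π*x)) (vf_pos x)
  rw [h]
  have hden : (1 + sin (π*x) * cos (π*x))^2 + (sin (π*x)^2)^2 = Df x := by
    unfold Df
    linear_combination (sin (π*x))^2 * Real.sin_sq_add_cos_sq (π*x)
  rw [hden]
  congr 1
  ring

lemma cos_pf (x : ℝ) : cos (π * pf x) = (sin (π*x) + cos (π*x)) / Real.sqrt (Df x) := by
  rw [pf_angle]
  obtain ⟨-, h⟩ := sin_cos_sub_arctan (π*x) (sin (π*x)^2) (1 + sin (π*x) * cos (π*x)) (vf_pos x)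
  rw [h]
  have hden : (1 + sin (π*x) * cos (π*x))^2 + (sin (π*x)^2)^2 = Df x := by
    unfold Df
    linear_combination (sin (π*x))^2 * Real.sin_sq_add_cos_sq (π*x)
  rw [hden]
  congr 1
  linear_combination sin (π*x) * Real.sin_sq_add_cos_sq (π*x)

lemma sin_pg (x : ℝ) : sin (π * pg x) = sin (π*x) / Real.sqrt (Dg x) := by
  rw [pg_angle]
  obtain ⟨h, -⟩ := sin_cos_sub_arctan (π*x) (sin (π*x) * cos (π*x)) (1 + cos (π*x)^2) (vg_pos x)
  rw [h]
  have hden : (1 + cos (π*x)^2)^2 + (sin (π*x) * cos (π*x))^2 = Dg x := by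
    unfold Dg
    linear_combination (cos (π*x))^2 * Real.sin_sq_add_cos_sq (π*x)
  rw [hden]
  congr 1
  ring

lemma cos_pg (x : ℝ) : cos (π * pg x) = (2 * cos (π*x)) / Real.sqrt (Dg x) := by
  rw [pg_angle]
  obtain ⟨-, h⟩ := sin_cos_sub_arctan (π*x) (sin (π*x) * cos (π*x)) (1 + cos (π*x)^2) (vg_pos x)
  rw [h]
  have hden : (1 + cos (π*x)^2)^2 + (sin (π*x) * cos (π*x))^2 = Dg x := by
    unfold Dg
    linear_combination (cos (π*x))^2 * Real.sin_sq_add_cos_sq (π*x)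
  rw [hden]
  congr 1
  linear_combination cos (π*x) * Real.sin_sq_add_cos_sq (π*x)

noncomputable def Tt (x : ℝ) : ℝ :=
  1 + 4 * sin (π*x)^2 + 8 * sin (π*x) * cos (π*x) + 3 * cos (π*x)^2

lemma Tt_pos (x : ℝ) : 0 < Tt x := by
  have h := Real.sin_sq_add_cos_sq (π*x)
  unfold Tt
  nlinarith [sq_nonneg (2*sin (π*x) + 2*cos (π*x)), sq_nonneg (sin (π*x)),
    sq_nonneg (sin (π*x) + 2*cos (π*x)), sq_nonneg (sin (π*x) + cos (π*x)),
    sq_nonneg (cos (π*x)), sq_nonneg (3*sin (π*x) + 2*cos (π*x))]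

noncomputable def Ff (x : ℝ) : ℝ :=
  1 + 3 * cos (π*x)^2 + sin (π*x)^2 + 4 * sin (π*x) * cos (π*x)

lemma Ff_pos (x : ℝ) : 0 < Ff x := by
  have h := Real.sin_sq_add_cos_sq (π*x)
  unfold Ff
  nlinarith [sq_nonneg (sin (π*x) + 2*cos (π*x)), sq_nonneg (sin (π*x) + cos (π*x)),
    sq_nonneg (sin (π*x)), sq_nonneg (cos (π*x))]

lemma sqrt_ne (t : ℝ) (h : 0 < t) : Real.sqrt t ≠ 0 := (Real.sqrt_pos.2 h).ne'

-- LHS: sin and cos of π * pg (pf x)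
lemma lhs_sin_cos (x : ℝ) :
    sin (π * pg (pf x)) = sin (π*x) / Real.sqrt (Tt x) ∧
    cos (π * pg (pf x)) = (2*sin (π*x) + 2*cos (π*x)) / Real.sqrt (Tt x) := by
  have hD := Df_pos x
  have hT := Tt_pos x
  have h1 : Dg (pf x) = Tt x / Df x := by
    unfold Dg
    rw [cos_pf, div_pow, Real.sq_sqrt hD.le]
    field_simp
    unfold Tt Df
    ring
  have h2 : Real.sqrt (Dg (pf x)) = Real.sqrt (Tt x) / Real.sqrt (Df x) := by
    rw [h1, Real.sqrt_div hT.le]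
  constructor
  · rw [sin_pg (pf x), h2, sin_pf x]
    rw [div_div_div_eq]
    rw [mul_comm (√(Df x)), mul_div_mul_right _ _ (sqrt_ne _ hD)]
  · rw [cos_pg (pf x), h2, cos_pf x]
    field_simp [sqrt_ne _ hD, sqrt_ne _ hT]

-- RHS
lemma rhs_mid (x : ℝ) :
    sin (π * pf (pg x)) = sin (π*x) / Real.sqrt (Ff x) ∧
    cos (π * pf (pg x)) = (sin (π*x) + 2*cos (π*x)) / Real.sqrt (Ff x) := by
  have hE := Dg_pos x
  have hF := Ff_pos x
  have h1 : Df (pg x) = Ff x / Dg x := by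
    unfold Df
    rw [cos_pg, sin_pg, div_pow, Real.sq_sqrt hE.le]
    field_simp [sqrt_ne _ hE]
    rw [Real.sq_sqrt hE.le]
    unfold Ff Dg
    ring
  have h2 : Real.sqrt (Df (pg x)) = Real.sqrt (Ff x) / Real.sqrt (Dg x) := by
    rw [h1, Real.sqrt_div hF.le]
  constructor
  · rw [sin_pf (pg x), h2, sin_pg x, div_div_div_eq,
      mul_comm (√(Dg x)), mul_div_mul_right _ _ (sqrt_ne _ hE)]
  · rw [cos_pf (pg x), h2, sin_pg x, cos_pg x]
    field_simp [sqrt_ne _ hE, sqrt_ne _ hF]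

lemma rhs_sin_cos (x : ℝ) :
    sin (π * pf (pf (pg x))) = sin (π*x) / Real.sqrt (Tt x) ∧
    cos (π * pf (pf (pg x))) = (2*sin (π*x) + 2*cos (π*x)) / Real.sqrt (Tt x) := by
  have hF := Ff_pos x
  have hT := Tt_pos x
  obtain ⟨hm1, hm2⟩ := rhs_mid x
  have h1 : Df (pf (pg x)) = Tt x / Ff x := by
    unfold Df
    rw [hm1, hm2, div_pow, Real.sq_sqrt hF.le]
    field_simp [sqrt_ne _ hF]
    rw [Real.sq_sqrt hF.le]
    unfold Tt Ff
    ring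
  have h2 : Real.sqrt (Df (pf (pg x))) = Real.sqrt (Tt x) / Real.sqrt (Ff x) := by
    rw [h1, Real.sqrt_div hT.le]
  constructor
  · rw [sin_pf (pf (pg x)), h2, hm1, div_div_div_eq,
      mul_comm (√(Ff x)), mul_div_mul_right _ _ (sqrt_ne _ hF)]
  · rw [cos_pf (pf (pg x)), h2, hm1, hm2]
    field_simp [sqrt_ne _ hF, sqrt_ne _ hT]
    ring

lemma pf_disp (x : ℝ) : |pf x - x| ≤ arctan 2 / π := by
  have hv := vf_pos x
  have hW : |sin (π*x)^2 / (1 + sin (π*x) * cos (π*x))| ≤ 2 := by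
    rw [abs_div, abs_of_pos hv]
    rw [div_le_iff₀ hv]
    have h1 : sin (π*x)^2 ≤ 1 := Real.sin_sq_le_one (π*x)
    have h2 := sc_bound x
    have h3 := neg_abs_le (sin (π*x) * cos (π*x))
    rw [abs_of_nonneg (sq_nonneg _)]
    nlinarith
  have harc : |arctan (sin (π*x)^2 / (1 + sin (π*x) * cos (π*x)))| ≤ arctan 2 := by
    rw [abs_le] at hW ⊢
    constructor
    · rw [← Real.arctan_neg]
      exact Real.arctan_strictMono.monotone hW.1
    · exact Real.arctan_strictMono.monotone hW.2
  have : pf x - x = -((1/π) * arctan (sin (π*x)^2 / (1 + sin (π*x) * cos (π*x)))) := by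
    unfold pf; ring
  rw [this, abs_neg, abs_mul, abs_of_pos (by positivity : (0:ℝ) < 1/π)]
  rw [show arctan 2 / π = 1/π * arctan 2 by ring]
  exact mul_le_mul_of_nonneg_left harc (by positivity : (0:ℝ) ≤ 1/π)

lemma pg_disp (x : ℝ) : |pg x - x| ≤ arctan 2⁻¹ / π := by
  have hv := vg_pos x
  have hW : |sin (π*x) * cos (π*x) / (1 + cos (π*x)^2)| ≤ 2⁻¹ := by
    rw [abs_div, abs_of_pos hv]
    rw [div_le_iff₀ hv]
    have h2 := sc_bound x
    nlinarith [sq_nonneg (cos (π*x))]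
  have harc : |arctan (sin (π*x) * cos (π*x) / (1 + cos (π*x)^2))| ≤ arctan 2⁻¹ := by
    rw [abs_le] at hW ⊢
    constructor
    · rw [← Real.arctan_neg]
      exact Real.arctan_strictMono.monotone hW.1
    · exact Real.arctan_strictMono.monotone hW.2
  have : pg x - x = -((1/π) * arctan (sin (π*x) * cos (π*x) / (1 + cos (π*x)^2))) := by
    unfold pg; ring
  rw [this, abs_neg, abs_mul, abs_of_pos (by positivity : (0:ℝ) < 1/π)]
  rw [show arctan 2⁻¹ / π = 1/π * arctan 2⁻¹ by ring]
  exact mul_le_mul_of_nonneg_left harc (by positivity : (0:ℝ) ≤ 1/π)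

lemma comp_eq (x : ℝ) : pg (pf x) = pf (pf (pg x)) := by
  set a := pg (pf x) with ha
  set b := pf (pf (pg x)) with hb
  obtain ⟨hs1, hc1⟩ := lhs_sin_cos x
  obtain ⟨hs2, hc2⟩ := rhs_sin_cos x
  have hcos1 : cos (π*a - π*b) = 1 := by
    rw [Real.cos_sub, hs1, hc1, hs2, hc2]
    have hT := Tt_pos x
    have h := Real.sin_sq_add_cos_sq (π*b)
    rw [hs2, hc2] at h
    linarith [h]
  -- bound |a - b|
  have hbd : |a - b| < 2 := by
    have d1 := pf_disp x
    have d2 := pg_disp (pf x)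
    have d3 := pg_disp x
    have d4 := pf_disp (pg x)
    have d5 := pf_disp (pf (pg x))
    have hinv : arctan 2⁻¹ = π/2 - arctan 2 := Real.arctan_inv_of_pos (by norm_num)
    have hlt : arctan 2 < π/2 := Real.arctan_lt_pi_div_two 2
    have hπ : (0:ℝ) < π := Real.pi_pos
    have h1 : |a - x| ≤ arctan 2⁻¹/π + arctan 2/π := by
      calc |a - x| ≤ |a - pf x| + |pf x - x| := abs_sub_le _ _ _
        _ ≤ arctan 2⁻¹/π + arctan 2/π := add_le_add d2 d1
    have h2 : |b - x| ≤ arctan 2/π + (arctan 2/π + arctan 2⁻¹/π) := by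
      calc |b - x| ≤ |b - pf (pg x)| + |pf (pg x) - x| := abs_sub_le _ _ _
        _ ≤ arctan 2/π + (|pf (pg x) - pg x| + |pg x - x|) :=
            add_le_add d5 (abs_sub_le _ _ _)
        _ ≤ arctan 2/π + (arctan 2/π + arctan 2⁻¹/π) := by
            gcongr
    have h3 : |a - b| ≤ |a - x| + |x - b| := abs_sub_le _ _ _
    rw [abs_sub_comm x b] at h3
    have : 3 * (arctan 2/π) + 2 * (arctan 2⁻¹/π) < 2 := by
      rw [hinv]
      have h4 : 3 * (arctan 2/π) + 2*((π/2 - arctan 2)/π) = (arctan 2 + π)/π := by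
        field_simp
        ring
      rw [h4, div_lt_iff₀ hπ]
      nlinarith [hlt, hπ]
    linarith
  have hπ : (0:ℝ) < π := Real.pi_pos
  have hang : -(2*π) < π*a - π*b := by nlinarith [abs_lt.1 hbd]
  have hang2 : π*a - π*b < 2*π := by nlinarith [abs_lt.1 hbd]
  have := (Real.cos_eq_one_iff_of_lt_of_lt hang hang2).1 hcos1
  have : a = b := by
    have h0 : π * (a - b) = 0 := by linarith [this]
    rcases mul_eq_zero.1 h0 with h | h
    · exact absurd h hπ.ne'
    · linarith
  exact this

lemma hasDerivAt_pf (x : ℝ) : HasDerivAt pf (1 / Df x) x := by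
  have hv := vf_pos x
  have hD := Df_pos x
  have hlin : HasDerivAt (fun y : ℝ => π * y) π x := by
    simpa using (hasDerivAt_id x).const_mul π
  have hsin : HasDerivAt (fun y : ℝ => sin (π*y)) (cos (π*x) * π) x :=
    (Real.hasDerivAt_sin (π*x)).comp x hlin
  have hcos : HasDerivAt (fun y : ℝ => cos (π*y)) (-sin (π*x) * π) x :=
    (Real.hasDerivAt_cos (π*x)).comp x hlin
  have hnum : HasDerivAt (fun y : ℝ => sin (π*y)^2)
      (2 * sin (π*x) * (cos (π*x) * π)) x := by
    simpa using hsin.fun_pow 2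
  have hden : HasDerivAt (fun y : ℝ => 1 + sin (π*y) * cos (π*y))
      (cos (π*x) * π * cos (π*x) + sin (π*x) * (-sin (π*x) * π)) x :=
    (hsin.mul hcos).const_add 1
  have hW := hnum.fun_div hden hv.ne'
  have harc := hW.arctan
  have hfull := (hasDerivAt_id x).fun_sub (harc.const_mul (1/π))
  have heq : pf = fun y : ℝ =>
      y - (1/π) * arctan (sin (π*y)^2 / (1 + sin (π*y) * cos (π*y))) := rfl
  rw [heq]
  refine hfull.congr_deriv (Eq.symm ?_)
  have hpyth := Real.sin_sq_add_cos_sq (π*x)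
  have hπ : (0:ℝ) < π := Real.pi_pos
  set s := sin (π*x)
  set c := cos (π*x)
  have hD' : Df x = 1 + s^2 + 2*s*c := rfl
  have hsum : (1 + s*c)^2 + (s^2)^2 = Df x := by
    rw [hD']; linear_combination s^2 * hpyth
  field_simp
  rw [← hsum]
  ring

lemma hasDerivAt_pg (x : ℝ) : HasDerivAt pg (2 / Dg x) x := by
  have hv := vg_pos x
  have hD := Dg_pos x
  have hlin : HasDerivAt (fun y : ℝ => π * y) π x := by
    simpa using (hasDerivAt_id x).const_mul π
  have hsin : HasDerivAt (fun y : ℝ => sin (π*y)) (cos (π*x) * π) x :=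
    (Real.hasDerivAt_sin (π*x)).comp x hlin
  have hcos : HasDerivAt (fun y : ℝ => cos (π*y)) (-sin (π*x) * π) x :=
    (Real.hasDerivAt_cos (π*x)).comp x hlin
  have hnum : HasDerivAt (fun y : ℝ => sin (π*y) * cos (π*y))
      (cos (π*x) * π * cos (π*x) + sin (π*x) * (-sin (π*x) * π)) x := hsin.mul hcos
  have hden : HasDerivAt (fun y : ℝ => 1 + cos (π*y)^2)
      (2 * cos (π*x) * (-sin (π*x) * π)) x := by
    simpa using (hcos.fun_pow 2).const_add 1
  have hW := hnum.fun_div hden hv.ne'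
  have harc := hW.arctan
  have hfull := (hasDerivAt_id x).fun_sub (harc.const_mul (1/π))
  have heq : pg = fun y : ℝ =>
      y - (1/π) * arctan (sin (π*y) * cos (π*y) / (1 + cos (π*y)^2)) := rfl
  rw [heq]
  refine hfull.congr_deriv (Eq.symm ?_)
  have hpyth := Real.sin_sq_add_cos_sq (π*x)
  have hπ : (0:ℝ) < π := Real.pi_pos
  set s := sin (π*x)
  set c := cos (π*x)
  have hsum : (1 + c^2)^2 + (s*c)^2 = Dg x := by
    show _ = 1 + 3*c^2
    linear_combination c^2 * hpyth
  field_simp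
  rw [← hsum]
  linear_combination (-((1+c^2)^2 + s^2*c^2)) * hpyth

lemma deriv_pf : deriv pf = fun x => 1 / Df x := funext fun x => (hasDerivAt_pf x).deriv

lemma deriv_pg : deriv pg = fun x => 2 / Dg x := funext fun x => (hasDerivAt_pg x).deriv

lemma Df_zero : Df 0 = 1 := by
  unfold Df
  norm_num

lemma hasDerivAt_Df (x : ℝ) :
    HasDerivAt Df (2 * sin (π*x) * (cos (π*x) * π)
      + 2 * ((cos (π*x) * π) * cos (π*x) + sin (π*x) * (-sin (π*x) * π))) x := by
  have hlin : HasDerivAt (fun y : ℝ => π * y) π x := by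
    simpa using (hasDerivAt_id x).const_mul π
  have hsin : HasDerivAt (fun y : ℝ => sin (π*y)) (cos (π*x) * π) x :=
    (Real.hasDerivAt_sin (π*x)).comp x hlin
  have hcos : HasDerivAt (fun y : ℝ => cos (π*y)) (-sin (π*x) * π) x :=
    (Real.hasDerivAt_cos (π*x)).comp x hlin
  have h1 : HasDerivAt (fun y : ℝ => sin (π*y)^2) (2 * sin (π*x) * (cos (π*x) * π)) x := by
    simpa using hsin.fun_pow 2
  have h2 : HasDerivAt (fun y : ℝ => 2 * (sin (π*y) * cos (π*y)))
      (2 * ((cos (π*x) * π) * cos (π*x) + sin (π*x) * (-sin (π*x) * π))) x :=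
    (hsin.mul hcos).const_mul 2
  have := (h1.add h2).const_add 1
  have heq : Df = fun y : ℝ => 1 + (sin (π*y)^2 + 2 * (sin (π*y) * cos (π*y))) := by
    funext y; unfold Df; ring
  rw [heq]
  exact this

lemma deriv_deriv_pf : deriv (deriv pf) 0 = -(2*π) := by
  rw [deriv_pf]
  have hD := hasDerivAt_Df 0
  have hval : (2 * sin (π*0) * (cos (π*0) * π)
      + 2 * ((cos (π*0) * π) * cos (π*0) + sin (π*0) * (-sin (π*0) * π))) = 2*π := by
    norm_num
  rw [hval] at hD
  have hne : Df 0 ≠ 0 := by rw [Df_zero]; norm_num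
  have hinv := hD.fun_inv hne
  have : HasDerivAt (fun x => 1 / Df x) (-(2*π) / Df 0 ^ 2) 0 := by
    simpa only [one_div, neg_div] using hinv
  rw [this.deriv, Df_zero]
  norm_num

lemma pf_per (x : ℝ) : pf (x+1) = pf x + 1 := by
  unfold pf
  rw [mul_add, mul_one, Real.sin_add_pi, Real.cos_add_pi,
    show (-sin (π*x))^2 = sin (π*x)^2 by ring,
    show -sin (π*x) * -cos (π*x) = sin (π*x) * cos (π*x) by ring]
  ring

lemma pg_per (x : ℝ) : pg (x+1) = pg x + 1 := by
  unfold pg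
  rw [mul_add, mul_one, Real.sin_add_pi, Real.cos_add_pi,
    show -sin (π*x) * -cos (π*x) = sin (π*x) * cos (π*x) by ring,
    show (-cos (π*x))^2 = cos (π*x)^2 by ring]
  ring

lemma pf_zero : pf 0 = 0 := by
  unfold pf
  norm_num

lemma analyticAt_pf (x : ℝ) : AnalyticAt ℝ pf x := by
  have hlin : AnalyticAt ℝ (fun y : ℝ => π * y) x := analyticAt_const.mul analyticAt_id
  have hs : AnalyticAt ℝ (fun y : ℝ => sin (π*y)) x := (my_analyticAt_rsin _).comp hlin
  have hc : AnalyticAt ℝ (fun y : ℝ => cos (π*y)) x := (my_analyticAt_rcos _).comp hlin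
  have hW : AnalyticAt ℝ (fun y : ℝ => sin (π*y)^2 / (1 + sin (π*y) * cos (π*y))) x :=
    (hs.pow 2).div (analyticAt_const.add (hs.mul hc)) (vf_pos x).ne'
  exact analyticAt_id.sub (analyticAt_const.mul ((my_analyticAt_arctan _).comp hW))

lemma analyticAt_pg (x : ℝ) : AnalyticAt ℝ pg x := by
  have hlin : AnalyticAt ℝ (fun y : ℝ => π * y) x := analyticAt_const.mul analyticAt_id
  have hs : AnalyticAt ℝ (fun y : ℝ => sin (π*y)) x := (my_analyticAt_rsin _).comp hlin
  have hc : AnalyticAt ℝ (fun y : ℝ => cos (π*y)) x := (my_analyticAt_rcos _).comp hlin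
  have hW : AnalyticAt ℝ (fun y : ℝ => sin (π*y) * cos (π*y) / (1 + cos (π*y)^2)) x :=
    (hs.mul hc).div (analyticAt_const.add (hc.pow 2)) (vg_pos x).ne'
  exact analyticAt_id.sub (analyticAt_const.mul ((my_analyticAt_arctan _).comp hW))

lemma pf_fixed_unique (x : ℝ) (hx : x ∈ Set.Ico (0:ℝ) (0+1)) (hfx : pf x = x) : x = 0 := by
  have h1 : (1/π) * arctan (sin (π*x)^2 / (1 + sin (π*x) * cos (π*x))) = 0 := by
    have : pf x = x - (1/π) * arctan (sin (π*x)^2 / (1 + sin (π*x) * cos (π*x))) := rfl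
    rw [this] at hfx
    linarith
  have hπ : (0:ℝ) < π := Real.pi_pos
  have h2 : arctan (sin (π*x)^2 / (1 + sin (π*x) * cos (π*x))) = 0 := by
    rcases mul_eq_zero.1 h1 with h | h
    · exact absurd h (by positivity)
    · exact h
  have h3 := Real.arctan_eq_zero_iff.1 h2
  have h4 : sin (π*x)^2 = 0 := by
    rcases div_eq_zero_iff.1 h3 with h | h
    · exact h
    · exact absurd h (vf_pos x).ne'
  have h5 : sin (π*x) = 0 := by
    exact pow_eq_zero_iff (by norm_num) |>.1 h4
  obtain ⟨n, hn⟩ := Real.sin_eq_zero_iff.1 h5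
  have hxn : x = n := by
    rw [mul_comm (n:ℝ) π] at hn
    exact (mul_left_cancel₀ Real.pi_ne_zero hn).symm
  obtain ⟨hx0, hx1⟩ := hx
  rw [hxn] at hx0 hx1 ⊢
  have h6 : (0:ℤ) ≤ n := by exact_mod_cast hx0
  have h7 : (n:ℝ) < 1 := by norm_num at hx1; linarith
  have h8 : n < 1 := by exact_mod_cast h7
  have h9 : n = 0 := by omega
  rw [h9]
  norm_num

/-- Proposition 2: there is an analytic circle diffeomorphism `f`, distorted in a
finitely generated group (via the relation g f g⁻¹ = f²), whose unique fixed point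
`x₀` satisfies f'(x₀) = 1 and f''(x₀) ≠ 0. -/
theorem exists_analytic_distorted_with_parabolic_fixed_point :
    ∃ f g : ℝ → ℝ,
      (∀ x : ℝ, AnalyticAt ℝ f x) ∧ (∀ x : ℝ, AnalyticAt ℝ g x) ∧
      (∀ x : ℝ, f (x + 1) = f x + 1) ∧ (∀ x : ℝ, g (x + 1) = g x + 1) ∧
      (∀ x : ℝ, 0 < deriv f x) ∧ (∀ x : ℝ, 0 < deriv g x) ∧
      (∀ x : ℝ, g (f x) = f (f (g x))) ∧
      ∃ x₀ ∈ Set.Ico (0:ℝ) 1,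
        f x₀ = x₀ ∧ deriv f x₀ = 1 ∧ deriv (deriv f) x₀ ≠ 0 ∧
        (∀ x ∈ Set.Ico x₀ (x₀ + 1), f x = x → x = x₀) := by
  refine ⟨pf, pg, analyticAt_pf, analyticAt_pg, pf_per, pg_per, ?_, ?_, comp_eq, 0, ?_,
    pf_zero, ?_, ?_, ?_⟩
  · intro x
    rw [deriv_pf]
    have := Df_pos x
    positivity
  · intro x
    rw [deriv_pg]
    have := Dg_pos x
    positivity
  · constructor <;> norm_num
  · rw [deriv_pf]
    rw [show (fun x => 1 / Df x) 0 = 1 / Df 0 from rfl, Df_zero]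
    norm_num
  · rw [deriv_deriv_pf]
    have := Real.pi_pos
    intro h
    nlinarith
  · exact fun x hx hfx => pf_fixed_unique x hx hfx
end

section
/- Let f : ℝ → ℝ be a C^2 circle lift. Let a, b : ℤ → ℝ be sequences with f (a i) = a (i+1), f (b i) = b (i+1), and a i ≤ b i for all i ∈ ℤ. Suppose all the closed intervals [a i, b i] (i ∈ ℤ) are contained in the open interval (0,1) and are pairwise disjoint, and suppose deriv (deriv f) x ≥ 0 for every x lying in any of the intervals [a i, b i]. Then for every finite subset S of ℤ, liminf_{n→∞} (1/n) ∫_0^1 |deriv (deriv (f^[n])) x / deriv (f^[n]) x| dx ≥ Σ_{i ∈ S} ∫_{a i}^{b i} (deriv (deriv f) x / deriv f x) dx. -/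
open Filter intervalIntegral

/-- Criterion for C^{1+AC} non-distortion (Lemma 3): if f'' ≥ 0 on the whole orbit of a
subarc, then d(fⁿ, id) grows at least linearly, with rate the sum over the orbit of
∫ f''/f'. -/
theorem c1ac_nondistortion_criterion
    (f : ℝ → ℝ) (hf : ContDiff ℝ 2 f)
    (hlift : ∀ x : ℝ, f (x + 1) = f x + 1)
    (hpos : ∀ x : ℝ, 0 < deriv f x)
    (a b : ℤ → ℝ)
    (hfa : ∀ i : ℤ, f (a i) = a (i + 1))
    (hfb : ∀ i : ℤ, f (b i) = b (i + 1))
    (hab : ∀ i : ℤ, a i ≤ b i)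
    (hsub : ∀ i : ℤ, Set.Icc (a i) (b i) ⊆ Set.Ioo (0:ℝ) 1)
    (hdisj : ∀ i j : ℤ, i ≠ j → Disjoint (Set.Icc (a i) (b i)) (Set.Icc (a j) (b j)))
    (hconvex : ∀ i : ℤ, ∀ x ∈ Set.Icc (a i) (b i), 0 ≤ deriv (deriv f) x) :
    ∀ S : Finset ℤ,
      (∑ i ∈ S, ∫ x in (a i)..(b i), deriv (deriv f) x / deriv f x) ≤
        Filter.liminf
          (fun n : ℕ => (1 / (n : ℝ)) *
            ∫ x in (0:ℝ)..1, |deriv (deriv (f^[n])) x / deriv (f^[n]) x|)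
          Filter.atTop := by
  intro S
  set L : ℕ → ℝ := fun n : ℕ => (1 / (n : ℝ)) *
      ∫ x in (0:ℝ)..1, |deriv (deriv (f^[n])) x / deriv (f^[n]) x| with hL_def
  set r : ℝ → ℝ := fun x => deriv (deriv f) x / deriv f x with hr_def
  set c : ℤ → ℝ := fun i => ∫ x in (a i)..(b i), r x with hc_def
  -- regularity facts
  have hsplit : ∀ g : ℝ → ℝ, ContDiff ℝ 2 g →
      Differentiable ℝ g ∧ Differentiable ℝ (deriv g) ∧ Continuous (deriv (deriv g)) := by
    intro g hg
    have h1 : ContDiff ℝ ((1 : ℕ) + 1 : ℕ) g := by exact_mod_cast hg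
    rw [show (((1:ℕ)+1:ℕ) : WithTop ℕ∞) = (1 : WithTop ℕ∞) + 1 by norm_num] at h1
    have h2 := (contDiff_succ_iff_deriv.mp h1).2.2
    exact ⟨hg.differentiable two_ne_zero, h2.differentiable one_ne_zero,
      (contDiff_one_iff_deriv.mp h2).2⟩
  obtain ⟨hd1, hd2, hc2⟩ := hsplit f hf
  have hc1 : Continuous (deriv f) := hd2.continuous
  have hrc : Continuous r := hc2.div hc1 fun x => (hpos x).ne'
  have hCn : ∀ n : ℕ, ContDiff ℝ 2 (f^[n]) := by
    intro n; induction n with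
    | zero => simpa using contDiff_id
    | succ n ih => rw [Function.iterate_succ']; exact hf.comp ih
  have hdn : ∀ n, Differentiable ℝ (f^[n]) := fun n => (hsplit _ (hCn n)).1
  have hdn' : ∀ n, Differentiable ℝ (deriv (f^[n])) := fun n => (hsplit _ (hCn n)).2.1
  have hcn' : ∀ n, Continuous (deriv (f^[n])) := fun n => (hdn' n).continuous
  -- positivity of the derivative of iterates, and the cocycle formula
  have key : ∀ n : ℕ, (∀ x, 0 < deriv (f^[n]) x) ∧
      (∀ x, deriv (deriv (f^[n])) x / deriv (f^[n]) x
        = ∑ k ∈ Finset.range n, r (f^[k] x) * deriv (f^[k]) x) := by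
    intro n; induction n with
    | zero =>
      constructor
      · intro x; simp
      · intro x; simp
    | succ n ih =>
      have hcomp : ∀ x, deriv (f^[n+1]) x = deriv f (f^[n] x) * deriv (f^[n]) x := by
        intro x
        rw [Function.iterate_succ']
        exact deriv_comp x (hd1 _) (hdn n x)
      refine ⟨fun x => by rw [hcomp]; exact mul_pos (hpos _) (ih.1 x), ?_⟩
      intro x
      have e1 : deriv (f^[n+1]) = fun y => deriv f (f^[n] y) * deriv (f^[n]) y := funext hcomp
      have hu : DifferentiableAt ℝ (fun y => deriv f (f^[n] y)) x :=
        (hd2 _).comp x (hdn n x)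
      have hdu : deriv (fun y => deriv f (f^[n] y)) x
          = deriv (deriv f) (f^[n] x) * deriv (f^[n]) x := by
        have := deriv_comp x (hd2 (f^[n] x)) (hdn n x)
        exact this
      have e2 : deriv (deriv (f^[n+1])) x
          = deriv (deriv f) (f^[n] x) * deriv (f^[n]) x * deriv (f^[n]) x
            + deriv f (f^[n] x) * deriv (deriv (f^[n])) x := by
        rw [e1, deriv_fun_mul hu (hdn' n x), hdu]
      rw [e2, hcomp, Finset.sum_range_succ, ← ih.2 x]
      have hA : deriv f (f^[n] x) ≠ 0 := (hpos _).ne'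
      have hB : deriv (f^[n]) x ≠ 0 := (ih.1 x).ne'
      rw [hr_def]
      field_simp
      ring
  -- the cocycle
  set φ : ℕ → ℝ → ℝ := fun n x => ∑ k ∈ Finset.range n, r (f^[k] x) * deriv (f^[k]) x
    with hφ_def
  have hct : ∀ k : ℕ, Continuous fun x => r (f^[k] x) * deriv (f^[k]) x := fun k =>
    (hrc.comp (hCn k).continuous).mul (hcn' k)
  have hφc : ∀ n, Continuous (φ n) := fun n => continuous_finset_sum _ fun k _ => hct k
  have hId : ∀ n : ℕ, (∫ x in (0:ℝ)..1, |deriv (deriv (f^[n])) x / deriv (f^[n]) x|)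
      = ∫ x in (0:ℝ)..1, |φ n x| := fun n =>
    intervalIntegral.integral_congr fun x _ => by rw [(key n).2 x]
  -- endpoints travel along the orbit
  have hfa' : ∀ (k : ℕ) (i : ℤ), f^[k] (a i) = a (i + k) := by
    intro k; induction k with
    | zero => intro i; simp
    | succ k ih =>
      intro i
      rw [Function.iterate_succ_apply', ih, hfa]
      congr 1; push_cast; ring
  have hfb' : ∀ (k : ℕ) (i : ℤ), f^[k] (b i) = b (i + k) := by
    intro k; induction k with
    | zero => intro i; simp
    | succ k ih =>
      intro i
      rw [Function.iterate_succ_apply', ih, hfb]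
      congr 1; push_cast; ring
  have hc0 : ∀ i, 0 ≤ c i := fun i =>
    intervalIntegral.integral_nonneg (hab i) fun x hx => div_nonneg (hconvex i x hx) (hpos x).le
  -- change of variables
  have hcov : ∀ (k : ℕ) (g : ℝ → ℝ), Continuous g → ∀ u v : ℝ,
      (∫ x in u..v, g (f^[k] x) * deriv (f^[k]) x) = ∫ x in (f^[k] u)..(f^[k] v), g x := by
    intro k g hg u v
    rw [← intervalIntegral.integral_comp_mul_deriv (fun x _ => (hdn k x).hasDerivAt)
      (hcn' k).continuousOn hg]
    rfl
  have hint : ∀ (n : ℕ) (i : ℤ),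
      (∫ x in (a i)..(b i), φ n x) = ∑ k ∈ Finset.range n, c (i + k) := by
    intro n i
    simp only [hφ_def]
    rw [intervalIntegral.integral_finset_sum (fun k _ =>
      ((hct k).intervalIntegrable _ _))]
    refine Finset.sum_congr rfl fun k _ => ?_
    rw [hcov k r hrc, hfa' k, hfb' k, hc_def]
  -- main lower bound over finite index sets
  have hmain : ∀ (n : ℕ) (J : Finset ℤ),
      (∑ j ∈ J, ∑ k ∈ Finset.range n, c (j + k)) ≤ ∫ x in (0:ℝ)..1, |φ n x| := by
    intro n J
    have habs_int : MeasureTheory.IntegrableOn (fun x => |φ n x|) (Set.Ioc (0:ℝ) 1) :=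
      (hφc n).abs.integrableOn_Ioc
    calc ∑ j ∈ J, ∑ k ∈ Finset.range n, c (j + k)
        ≤ ∑ j ∈ J, ∫ x in Set.Ioc (a j) (b j), |φ n x| := by
          refine Finset.sum_le_sum fun j _ => ?_
          rw [← hint n j, intervalIntegral.integral_of_le (hab j)]
          exact MeasureTheory.setIntegral_mono (hφc n).integrableOn_Ioc
            (hφc n).abs.integrableOn_Ioc fun x => le_abs_self _
      _ = ∫ x in ⋃ j ∈ J, Set.Ioc (a j) (b j), |φ n x| := by
          rw [MeasureTheory.integral_biUnion_finset J (fun j _ => measurableSet_Ioc)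
            (fun j _ j' _ hne => ((hdisj j j' hne).mono Set.Ioc_subset_Icc_self
              Set.Ioc_subset_Icc_self))
            (fun j _ => (hφc n).abs.integrableOn_Ioc)]
      _ ≤ ∫ x in Set.Ioc (0:ℝ) 1, |φ n x| := by
          refine MeasureTheory.setIntegral_mono_set habs_int
            (Filter.Eventually.of_forall fun x => abs_nonneg _)
            (HasSubset.Subset.eventuallyLE ?_)
          intro x hx
          simp only [Set.mem_iUnion] at hx
          obtain ⟨j, _, hj⟩ := hx
          have hx2 := hsub j (Set.Ioc_subset_Icc_self hj)
          exact ⟨hx2.1, hx2.2.le⟩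
      _ = ∫ x in (0:ℝ)..1, |φ n x| := (intervalIntegral.integral_of_le zero_le_one).symm
  -- upper bound (for coboundedness of the liminf): periodicity
  have hshift : ∀ (g : ℝ → ℝ) (cst : ℝ), (∀ x, g (x + 1) = g x + cst) →
      ∀ x, deriv g (x + 1) = deriv g x := by
    intro g cst hgp x
    have h1 : (fun y => g (y + 1)) = fun y => g y + cst := funext hgp
    have h2 := deriv_comp_add_const g 1 x
    rw [h1, deriv_add_const] at h2
    exact h2.symm
  have hp1 : ∀ x, deriv f (x + 1) = deriv f x := hshift f 1 hlift
  have hp2 : ∀ x, deriv (deriv f) (x + 1) = deriv (deriv f) x :=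
    hshift (deriv f) 0 fun x => by rw [hp1, add_zero]
  have hrper : Function.Periodic (fun x => |r x|) 1 := fun x => by
    simp only [hr_def, hp1, hp2]
  have hliftn : ∀ (k : ℕ) (x : ℝ), f^[k] (x + 1) = f^[k] x + 1 := by
    intro k; induction k with
    | zero => intro x; simp
    | succ k ih =>
      intro x
      rw [Function.iterate_succ_apply', ih, hlift, Function.iterate_succ_apply']
  set C : ℝ := ∫ x in (0:ℝ)..1, |r x| with hC_def
  have hC0 : 0 ≤ C :=
    intervalIntegral.integral_nonneg zero_le_one fun x _ => abs_nonneg _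
  have hub : ∀ n : ℕ, (∫ x in (0:ℝ)..1, |φ n x|) ≤ n * C := by
    intro n
    have step : ∀ k : ℕ, (∫ x in (0:ℝ)..1, |r (f^[k] x) * deriv (f^[k]) x|) = C := by
      intro k
      have habs : ∀ x : ℝ, |r (f^[k] x) * deriv (f^[k]) x|
          = |r (f^[k] x)| * deriv (f^[k]) x := by
        intro x; rw [abs_mul, abs_of_pos ((key k).1 x)]
      calc (∫ x in (0:ℝ)..1, |r (f^[k] x) * deriv (f^[k]) x|)
          = ∫ x in (0:ℝ)..1, |r (f^[k] x)| * deriv (f^[k]) x := by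
            simp only [habs]
        _ = ∫ x in (f^[k] 0)..(f^[k] 1), |r x| := hcov k (fun x => |r x|) hrc.abs 0 1
        _ = C := by
            have h1 : f^[k] (1:ℝ) = f^[k] 0 + 1 := by simpa using hliftn k 0
            rw [h1, hrper.intervalIntegral_add_eq (f^[k] 0) 0, hC_def]
            norm_num
    calc (∫ x in (0:ℝ)..1, |φ n x|)
        ≤ ∫ x in (0:ℝ)..1, ∑ k ∈ Finset.range n, |r (f^[k] x) * deriv (f^[k]) x| := by
          refine intervalIntegral.integral_mono_on zero_le_one
            ((hφc n).abs.intervalIntegrable _ _)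
            ((continuous_finset_sum _ fun k _ => (hct k).abs).intervalIntegrable _ _)
            fun x _ => ?_
          exact Finset.abs_sum_le_sum_abs _ _
      _ = ∑ k ∈ Finset.range n, ∫ x in (0:ℝ)..1, |r (f^[k] x) * deriv (f^[k]) x| :=
          intervalIntegral.integral_finset_sum fun k _ =>
            ((hct k).abs.intervalIntegrable _ _)
      _ = ∑ _k ∈ Finset.range n, C := Finset.sum_congr rfl fun k _ => step k
      _ = n * C := by rw [Finset.sum_const, Finset.card_range, nsmul_eq_mul]
  -- positivity and coboundedness of L
  have hL0 : ∀ n, 0 ≤ L n := fun n => mul_nonneg (by positivity)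
    (intervalIntegral.integral_nonneg zero_le_one fun x _ => abs_nonneg _)
  have hLle : ∀ᶠ n : ℕ in atTop, L n ≤ C := by
    filter_upwards [eventually_ge_atTop 1] with n hn
    have hn0 : (0:ℝ) < (n:ℝ) := by exact_mod_cast hn
    have : L n = (1 / (n:ℝ)) * ∫ x in (0:ℝ)..1, |φ n x| := by
      simp only [hL_def]; rw [hId n]
    rw [this]
    calc (1 / (n:ℝ)) * ∫ x in (0:ℝ)..1, |φ n x|
        ≤ (1 / (n:ℝ)) * ((n:ℝ) * C) := by
          exact mul_le_mul_of_nonneg_left (hub n) (by positivity)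
      _ = C := by field_simp
  have hcob : IsCoboundedUnder (· ≥ ·) atTop L :=
    isCoboundedUnder_ge_of_eventually_le atTop hLle
  -- conclude
  rcases S.eq_empty_or_nonempty with rfl | hS
  · simp only [Finset.sum_empty]
    exact le_liminf_of_le hcob (Filter.Eventually.of_forall hL0)
  · set m : ℤ := S.min' hS with hm_def
    set M : ℤ := S.max' hS with hM_def
    have hmM : m ≤ M := S.min'_le _ (S.max'_mem hS)
    set T : ℝ := ∑ i ∈ S, c i with hT_def
    have hT0 : 0 ≤ T := Finset.sum_nonneg fun i _ => hc0 i
    have hjT : ∀ (n : ℕ) (j : ℤ), j ≤ m → M < j + n →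
        T ≤ ∑ k ∈ Finset.range n, c (j + k) := by
      intro n j hjm hjM
      have heq : ∑ k ∈ Finset.range n, c (j + k)
          = ∑ i ∈ (Finset.range n).map ⟨fun k : ℕ => j + (k:ℤ), fun x y h => by simp only [add_right_inj, Nat.cast_inj] at h; exact h⟩, c i := by
        rw [Finset.sum_map]
        rfl
      rw [hT_def, heq]
      refine Finset.sum_le_sum_of_subset_of_nonneg ?_ fun i _ _ => hc0 i
      intro i hi
      simp only [Finset.mem_map, Finset.mem_range, Function.Embedding.coeFn_mk]
      have h1 : j ≤ i := le_trans hjm (S.min'_le i hi)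
      have h2 : i ≤ M := S.le_max' i hi
      exact ⟨(i - j).toNat, by omega, show j + ((i - j).toNat : ℤ) = i by omega⟩
    set D : ℝ := ((M - m).toNat : ℝ) with hD_def
    have hmain2 : ∀ n : ℕ, ((n : ℝ) - D) * T ≤ ∫ x in (0:ℝ)..1, |φ n x| := by
      intro n
      set J : Finset ℤ := Finset.Icc (M + 1 - n) m with hJ_def
      have hcard : ((n : ℤ) - (M - m)) ≤ (J.card : ℤ) := by
        have h := Int.card_Icc (M + 1 - n) m
        rw [hJ_def]
        omega
      have hcardR : (n : ℝ) - D ≤ (J.card : ℝ) := by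
        rw [hD_def]
        have hMm : (((M - m).toNat : ℤ)) = M - m := Int.toNat_of_nonneg (by omega)
        have : ((n : ℤ) - ((M - m).toNat : ℤ)) ≤ (J.card : ℤ) := by omega
        exact_mod_cast this
      calc ((n : ℝ) - D) * T ≤ (J.card : ℝ) * T := mul_le_mul_of_nonneg_right hcardR hT0
        _ = ∑ _j ∈ J, T := by rw [Finset.sum_const, nsmul_eq_mul]
        _ ≤ ∑ j ∈ J, ∑ k ∈ Finset.range n, c (j + k) := by
            refine Finset.sum_le_sum fun j hj => ?_
            have hj' := Finset.mem_Icc.mp hj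
            exact hjT n j hj'.2 (by omega)
        _ ≤ ∫ x in (0:ℝ)..1, |φ n x| := hmain n J
    -- liminf argument
    set v : ℕ → ℝ := fun n => (1 - D * (1 / (n:ℝ))) * T with hv_def
    have hvT : Tendsto v atTop (nhds T) := by
      have h1 : Tendsto (fun n : ℕ => (1 - D * (1 / (n:ℝ))) * T) atTop (nhds ((1 - D * 0) * T)) :=
        ((tendsto_const_nhds.sub
          (tendsto_const_nhds.mul tendsto_one_div_atTop_nhds_zero_nat)).mul tendsto_const_nhds)
      rw [hv_def]
      simpa using h1
    have hlow : ∀ᶠ n : ℕ in atTop, v n ≤ L n := by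
      filter_upwards [eventually_ge_atTop 1] with n hn
      have hn0 : (0:ℝ) < (n:ℝ) := by exact_mod_cast hn
      have hv' : v n = (1 / (n:ℝ)) * (((n:ℝ) - D) * T) := by
        rw [hv_def]; field_simp
      have hL' : L n = (1 / (n:ℝ)) * ∫ x in (0:ℝ)..1, |φ n x| := by
        simp only [hL_def]; rw [hId n]
      rw [hv', hL']
      exact mul_le_mul_of_nonneg_left (hmain2 n) (by positivity)
    have hfin : T ≤ liminf L atTop := by
      have h1 : liminf v atTop = T := hvT.liminf_eq
      rw [← h1]
      exact liminf_le_liminf hlow hvT.isBoundedUnder_ge hcob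
    exact hfin
end

section
/- Let f : ℝ → ℝ be twice continuously differentiable with f 0 = 0, f 1 = 1, and deriv f x > 0 for all x ∈ [0,1]. If M ≥ 0 and ∫_0^1 |deriv (deriv f) x / deriv f x| dx ≤ M, then for every x ∈ [0,1], exp(−M) ≤ deriv f x ≤ exp(M). -/
open intervalIntegral

/-- If ∫₀¹ |f''/f'| ≤ M for an interval diffeomorphism f, then e^{-M} ≤ f' ≤ e^M
on [0,1]. -/
theorem deriv_bounds_of_nonlinearity_integral_bound
    (f : ℝ → ℝ) (hf : ContDiff ℝ 2 f)
    (h0 : f 0 = 0) (h1 : f 1 = 1)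
    (hpos : ∀ x ∈ Set.Icc (0:ℝ) 1, 0 < deriv f x)
    (M : ℝ) (hM : 0 ≤ M)
    (hint : (∫ x in (0:ℝ)..1, |deriv (deriv f) x / deriv f x|) ≤ M) :
    ∀ x ∈ Set.Icc (0:ℝ) 1, Real.exp (-M) ≤ deriv f x ∧ deriv f x ≤ Real.exp M := by
  have hf2 : ContDiff ℝ 1 (deriv f) := by
    have := (contDiff_succ_iff_deriv (n := 1)).mp (by exact_mod_cast hf)
    exact this.2.2
  have hd2 : Differentiable ℝ (deriv f) := hf2.differentiable one_ne_zero
  have hcont2 : Continuous (deriv (deriv f)) := hf2.continuous_deriv le_rfl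
  have hcd : Differentiable ℝ f := hf.differentiable two_ne_zero
  -- MVT point
  obtain ⟨c, hc, hc1⟩ := exists_deriv_eq_slope f one_pos
    (hcd.continuous.continuousOn) (hcd.differentiableOn)
  rw [h1, h0] at hc1
  norm_num at hc1
  have hcmem : c ∈ Set.Icc (0:ℝ) 1 := Set.Ioo_subset_Icc_self hc
  set h : ℝ → ℝ := fun t => deriv (deriv f) t / deriv f t with hh
  have hhcont : ContinuousOn h (Set.Icc 0 1) :=
    hcont2.continuousOn.div (hf2.continuous.continuousOn)
      (fun t ht => (hpos t ht).ne')
  intro x hx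
  have hsub : Set.uIcc c x ⊆ Set.Icc 0 1 := Set.uIcc_subset_Icc hcmem hx
  have key : ∫ t in c..x, h t = Real.log (deriv f x) - Real.log (deriv f c) := by
    apply integral_eq_sub_of_hasDerivAt
    · intro t ht
      exact ((hd2 t).hasDerivAt).log (hpos t (hsub ht)).ne'
    · exact (hhcont.mono hsub).intervalIntegrable
  rw [hc1, Real.log_one, sub_zero] at key
  have habs : |Real.log (deriv f x)| ≤ M := by
    rw [← key]
    calc |∫ t in c..x, h t| ≤ |(∫ t in c..x, |h t|)| := by
          simpa [Real.norm_eq_abs] using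
            intervalIntegral.norm_integral_le_abs_integral_norm (f := h) (a := c) (b := x)
              (μ := MeasureTheory.volume)
      _ ≤ |(∫ t in (0:ℝ)..1, |h t|)| := by
          apply intervalIntegral.abs_integral_mono_interval
          · rw [Set.uIoc, Set.uIoc]
            exact Set.Ioc_subset_Ioc (by simpa using le_min hcmem.1 hx.1)
              (by simpa using max_le hcmem.2 hx.2)
          · exact MeasureTheory.ae_of_all _ (fun t => abs_nonneg _)
          · exact (hhcont.abs.intervalIntegrable_of_Icc zero_le_one)
      _ = ∫ t in (0:ℝ)..1, |h t| := by
          apply abs_of_nonneg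
          exact intervalIntegral.integral_nonneg zero_le_one (fun t _ => abs_nonneg _)
      _ ≤ M := hint
  rw [abs_le] at habs
  have hpx := hpos x hx
  constructor
  · calc Real.exp (-M) ≤ Real.exp (Real.log (deriv f x)) := Real.exp_le_exp.mpr habs.1
      _ = deriv f x := Real.exp_log hpx
  · calc deriv f x = Real.exp (Real.log (deriv f x)) := (Real.exp_log hpx).symm
      _ ≤ Real.exp M := Real.exp_le_exp.mpr habs.2
end

section
/- Let f : ℝ → ℝ be twice continuously differentiable with f 0 = 0, f 1 = 1, and deriv f x > 0 for all x ∈ [0,1], and suppose M ≥ 0 satisfies ∫_0^1 |deriv (deriv f) x / deriv f x| dx ≤ M. For t ∈ [0,1], define g_t : ℝ → ℝ by g_t x = t·x + (1−t)·(f x). Then each g_t is twice continuously differentiable with g_t 0 = 0, g_t 1 = 1, and deriv g_t x > 0 for all x ∈ [0,1]; and for all s, t ∈ [0,1], ∫_0^1 |deriv (deriv g_t) x / deriv g_t x − deriv (deriv g_s) x / deriv g_s x| dx ≤ M · exp(2M) · |t − s|. -/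
open intervalIntegral


private lemma interp_pointwise_aux (M a b t s : ℝ) (hM : 0 ≤ M)
    (hap : 0 < a) (halo : Real.exp (-M) ≤ a) (hahi : a ≤ Real.exp M)
    (ht : t ∈ Set.Icc (0:ℝ) 1) (hs : s ∈ Set.Icc (0:ℝ) 1) :
    |(1 - t) * b / (t + (1 - t) * a) - (1 - s) * b / (s + (1 - s) * a)|
      ≤ |b / a| * (Real.exp (2 * M) * |t - s|) := by
  have hDtp : 0 < t + (1 - t) * a := by
    rcases le_total a 1 with h | h
    · nlinarith [mul_nonneg ht.1 (sub_nonneg.2 h)]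
    · nlinarith [mul_nonneg (sub_nonneg.2 ht.2) (sub_nonneg.2 h)]
  have hDsp : 0 < s + (1 - s) * a := by
    rcases le_total a 1 with h | h
    · nlinarith [mul_nonneg hs.1 (sub_nonneg.2 h)]
    · nlinarith [mul_nonneg (sub_nonneg.2 hs.2) (sub_nonneg.2 h)]
  have hkey : (1 - t) * b / (t + (1 - t) * a) - (1 - s) * b / (s + (1 - s) * a)
      = b * (s - t) / ((t + (1 - t) * a) * (s + (1 - s) * a)) := by
    rw [div_sub_div _ _ hDtp.ne' hDsp.ne']
    ring
  rw [hkey, abs_div, abs_mul, abs_of_pos (mul_pos hDtp hDsp), abs_div, abs_of_pos hap,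
    abs_sub_comm s t, div_le_iff₀ (mul_pos hDtp hDsp)]
  have hexpM_ge : (1:ℝ) ≤ Real.exp M := Real.one_le_exp hM
  have h2M : Real.exp M ≤ Real.exp (2 * M) := Real.exp_le_exp.mpr (by linarith)
  have hMa : 1 ≤ Real.exp (2 * M) * a := by
    calc (1:ℝ) ≤ Real.exp M := hexpM_ge
      _ = Real.exp (2 * M) * Real.exp (-M) := by rw [← Real.exp_add]; ring_nf
      _ ≤ Real.exp (2 * M) * a := by
          exact mul_le_mul_of_nonneg_left halo (Real.exp_pos _).le
  have hkey2 : a ≤ Real.exp (2 * M) * ((t + (1 - t) * a) * (s + (1 - s) * a)) := by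
    rcases le_total a 1 with hle | hge
    · have hDta : a ≤ t + (1 - t) * a := by nlinarith [ht.1, ht.2]
      have hDsa : a ≤ s + (1 - s) * a := by nlinarith [hs.1, hs.2]
      have haa : a * a ≤ (t + (1 - t) * a) * (s + (1 - s) * a) :=
        mul_le_mul hDta hDsa hap.le hDtp.le
      nlinarith [Real.exp_pos (2 * M)]
    · have hDt1 : (1:ℝ) ≤ t + (1 - t) * a := by nlinarith [ht.1, ht.2]
      have hDs1 : (1:ℝ) ≤ s + (1 - s) * a := by nlinarith [hs.1, hs.2]
      have h11 : (1:ℝ) ≤ (t + (1 - t) * a) * (s + (1 - s) * a) := by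
        nlinarith [mul_nonneg (sub_nonneg.2 hDt1) (sub_nonneg.2 hDs1)]
      have : a ≤ Real.exp (2 * M) := le_trans hahi h2M
      nlinarith [Real.exp_pos (2 * M)]
  have h3 : |b| / a * (Real.exp (2 * M) * |t - s|) * ((t + (1 - t) * a) * (s + (1 - s) * a))
      = |b| * |t - s| * (Real.exp (2 * M) * ((t + (1 - t) * a) * (s + (1 - s) * a)) / a) := by
    field_simp
  rw [h3]
  have h4 : (1:ℝ) ≤ Real.exp (2 * M) * ((t + (1 - t) * a) * (s + (1 - s) * a)) / a :=
    (one_le_div hap).mpr hkey2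
  nlinarith [mul_nonneg (abs_nonneg b) (abs_nonneg (t - s))]

/-- The interpolation estimate in Lemma 4.2: the straight-line path t ↦ t·id + (1−t)·f
moves with speed at most M·e^{2M} in the metric d(f,g) = ∫₀¹|f''/f' − g''/g'|. -/
theorem interval_interpolation_nonlinearity_estimate
    (f : ℝ → ℝ) (hf : ContDiff ℝ 2 f)
    (h0 : f 0 = 0) (h1 : f 1 = 1)
    (hpos : ∀ x ∈ Set.Icc (0:ℝ) 1, 0 < deriv f x)
    (M : ℝ) (hM : 0 ≤ M)
    (hint : (∫ x in (0:ℝ)..1, |deriv (deriv f) x / deriv f x|) ≤ M)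
    (g : ℝ → ℝ → ℝ)
    (hg : ∀ t x : ℝ, g t x = t * x + (1 - t) * f x) :
    (∀ t ∈ Set.Icc (0:ℝ) 1,
        ContDiff ℝ 2 (g t) ∧ g t 0 = 0 ∧ g t 1 = 1 ∧
        ∀ x ∈ Set.Icc (0:ℝ) 1, 0 < deriv (g t) x) ∧
      ∀ s ∈ Set.Icc (0:ℝ) 1, ∀ t ∈ Set.Icc (0:ℝ) 1,
        (∫ x in (0:ℝ)..1,
            |deriv (deriv (g t)) x / deriv (g t) x -
              deriv (deriv (g s)) x / deriv (g s) x|) ≤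
          M * Real.exp (2 * M) * |t - s| := by
  have hfd : Differentiable ℝ f := hf.differentiable (by norm_num)
  have hf1 : ContDiff ℝ 1 (deriv f) :=
    ((contDiff_succ_iff_deriv (n := 1)).mp (by exact_mod_cast hf)).2.2
  have hfd2 : Differentiable ℝ (deriv f) := hf1.differentiable one_ne_zero
  have hc2 : Continuous (deriv (deriv f)) := (contDiff_one_iff_deriv.mp hf1).2
  have hc1 : Continuous (deriv f) := hfd2.continuous
  -- continuity of the nonlinearity of f on [0,1]
  have hcont_q : ContinuousOn (fun y => deriv (deriv f) y / deriv f y) (Set.Icc (0:ℝ) 1) :=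
    hc2.continuousOn.div hc1.continuousOn (fun y hy => (hpos y hy).ne')
  have habs_intg : IntervalIntegrable (fun y => |deriv (deriv f) y / deriv f y|)
      MeasureTheory.volume 0 1 := by
    apply ContinuousOn.intervalIntegrable
    rw [Set.uIcc_of_le (by norm_num : (0:ℝ) ≤ 1)]
    exact hcont_q.abs
  -- MVT point where f' = 1
  obtain ⟨c, hc, hcval⟩ := exists_hasDerivAt_eq_slope f (deriv f) (by norm_num : (0:ℝ) < 1)
    hfd.continuous.continuousOn (fun x _ => (hfd x).hasDerivAt)
  rw [h0, h1] at hcval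
  norm_num at hcval
  have hcIcc : c ∈ Set.Icc (0:ℝ) 1 := ⟨hc.1.le, hc.2.le⟩
  -- |log f'| ≤ M on [0,1]
  have hlog : ∀ x ∈ Set.Icc (0:ℝ) 1, |Real.log (deriv f x)| ≤ M := by
    intro x hx
    have hsub : Set.uIcc c x ⊆ Set.Icc (0:ℝ) 1 := Set.uIcc_subset_Icc hcIcc hx
    have hderivs : ∀ y ∈ Set.uIcc c x,
        HasDerivAt (fun z => Real.log (deriv f z)) (deriv (deriv f) y / deriv f y) y := by
      intro y hy
      exact ((hfd2 y).hasDerivAt).log (hpos y (hsub hy)).ne'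
    have hintg : IntervalIntegrable (fun y => deriv (deriv f) y / deriv f y)
        MeasureTheory.volume c x :=
      (hcont_q.mono hsub).intervalIntegrable
    have heq := intervalIntegral.integral_eq_sub_of_hasDerivAt hderivs hintg
    rw [hcval, Real.log_one, sub_zero] at heq
    have h1' : |Real.log (deriv f x)| ≤ |(∫ y in c..x, |deriv (deriv f) y / deriv f y|)| := by
      rw [← heq]
      have hn := intervalIntegral.norm_integral_le_abs_integral_norm
          (f := fun y => deriv (deriv f) y / deriv f y) (a := c) (b := x)
          (μ := MeasureTheory.volume)
      simp only [Real.norm_eq_abs] at hn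
      exact hn
    rcases le_total c x with hcx | hcx
    · have hnn : (0:ℝ) ≤ ∫ y in c..x, |deriv (deriv f) y / deriv f y| :=
        intervalIntegral.integral_nonneg hcx (fun u _ => abs_nonneg _)
      calc |Real.log (deriv f x)| ≤ |(∫ y in c..x, |deriv (deriv f) y / deriv f y|)| := h1'
        _ = ∫ y in c..x, |deriv (deriv f) y / deriv f y| := abs_of_nonneg hnn
        _ ≤ ∫ y in (0:ℝ)..1, |deriv (deriv f) y / deriv f y| :=
            intervalIntegral.integral_mono_interval hcIcc.1 hcx hx.2
              (MeasureTheory.ae_of_all _ fun y => abs_nonneg _) habs_intg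
        _ ≤ M := hint
    · have hnn : (0:ℝ) ≤ ∫ y in x..c, |deriv (deriv f) y / deriv f y| :=
        intervalIntegral.integral_nonneg hcx (fun u _ => abs_nonneg _)
      have hsymm : |(∫ y in c..x, |deriv (deriv f) y / deriv f y|)|
          = ∫ y in x..c, |deriv (deriv f) y / deriv f y| := by
        rw [intervalIntegral.integral_symm x c, abs_neg, abs_of_nonneg hnn]
      calc |Real.log (deriv f x)| ≤ |(∫ y in c..x, |deriv (deriv f) y / deriv f y|)| := h1'
        _ = ∫ y in x..c, |deriv (deriv f) y / deriv f y| := hsymm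
        _ ≤ ∫ y in (0:ℝ)..1, |deriv (deriv f) y / deriv f y| :=
            intervalIntegral.integral_mono_interval hx.1 hcx hcIcc.2
              (MeasureTheory.ae_of_all _ fun y => abs_nonneg _) habs_intg
        _ ≤ M := hint
  -- bounds on f'
  have hbound : ∀ x ∈ Set.Icc (0:ℝ) 1,
      Real.exp (-M) ≤ deriv f x ∧ deriv f x ≤ Real.exp M := by
    intro x hx
    have hl := abs_le.mp (hlog x hx)
    have hp := hpos x hx
    constructor
    · calc Real.exp (-M) ≤ Real.exp (Real.log (deriv f x)) := Real.exp_le_exp.mpr hl.1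
        _ = deriv f x := Real.exp_log hp
    · calc deriv f x = Real.exp (Real.log (deriv f x)) := (Real.exp_log hp).symm
        _ ≤ Real.exp M := Real.exp_le_exp.mpr hl.2
  -- derivatives of g t
  have hgderiv : ∀ t, deriv (g t) = fun x => t + (1 - t) * deriv f x := by
    intro t
    funext x
    have hgt : g t = fun x => t * x + (1 - t) * f x := funext (hg t)
    rw [hgt]
    have : HasDerivAt (fun x => t * x + (1 - t) * f x) (t + (1 - t) * deriv f x) x := by
      have h1 : HasDerivAt (fun x : ℝ => t * x) (t * 1) x := (hasDerivAt_id x).const_mul t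
      have h2 : HasDerivAt (fun x => (1 - t) * f x) ((1 - t) * deriv f x) x :=
        ((hfd x).hasDerivAt).const_mul (1 - t)
      have h3 := h1.add h2
      rw [mul_one] at h3
      exact h3
    exact this.deriv
  have hgderiv2 : ∀ t, deriv (deriv (g t)) = fun x => (1 - t) * deriv (deriv f) x := by
    intro t
    funext x
    rw [hgderiv t]
    have : HasDerivAt (fun x => t + (1 - t) * deriv f x) ((1 - t) * deriv (deriv f) x) x :=
      (((hfd2 x).hasDerivAt).const_mul (1 - t)).const_add t
    exact this.deriv
  -- positivity / lower bound of deriv (g t)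
  have hexpM1 : Real.exp (-M) ≤ 1 := Real.exp_le_one_iff.mpr (by linarith)
  have hDlow : ∀ t ∈ Set.Icc (0:ℝ) 1, ∀ x ∈ Set.Icc (0:ℝ) 1,
      Real.exp (-M) ≤ t + (1 - t) * deriv f x := by
    intro t ht x hx
    have hb := (hbound x hx).1
    nlinarith [ht.1, ht.2, Real.exp_pos (-M)]
  have hexp_pos : (0:ℝ) < Real.exp (-M) := Real.exp_pos _
  -- first conjunct
  constructor
  · intro t ht
    refine ⟨?_, ?_, ?_, ?_⟩
    · have hgt : g t = fun x => t * x + (1 - t) * f x := funext (hg t)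
      rw [hgt]
      exact ((contDiff_const.mul contDiff_id).add (contDiff_const.mul hf))
    · rw [hg t 0, h0]; ring
    · rw [hg t 1, h1]; ring
    · intro x hx
      rw [hgderiv t]
      exact lt_of_lt_of_le hexp_pos (hDlow t ht x hx)
  -- main estimate
  intro s hs t ht
  have habs_ts : (0:ℝ) ≤ Real.exp (2 * M) * |t - s| :=
    mul_nonneg (Real.exp_pos _).le (abs_nonneg _)
  -- pointwise estimate
  have hpt : ∀ x ∈ Set.Icc (0:ℝ) 1,
      |deriv (deriv (g t)) x / deriv (g t) x - deriv (deriv (g s)) x / deriv (g s) x|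
        ≤ |deriv (deriv f) x / deriv f x| * (Real.exp (2 * M) * |t - s|) := by
    intro x hx
    rw [hgderiv2 t, hgderiv2 s, hgderiv t, hgderiv s]
    simp only
    exact interp_pointwise_aux M (deriv f x) (deriv (deriv f) x) t s hM
      (hpos x hx) (hbound x hx).1 (hbound x hx).2 ht hs
  -- integrate the pointwise estimate
  have hintg1 : IntervalIntegrable
      (fun x => |deriv (deriv (g t)) x / deriv (g t) x - deriv (deriv (g s)) x / deriv (g s) x|)
      MeasureTheory.volume 0 1 := by
    apply ContinuousOn.intervalIntegrable
    rw [Set.uIcc_of_le (by norm_num : (0:ℝ) ≤ 1)]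
    apply ContinuousOn.abs
    apply ContinuousOn.sub
    · rw [hgderiv2 t, hgderiv t]
      have : ContinuousOn (fun x => ((1 - t) * deriv (deriv f) x) / (t + (1 - t) * deriv f x))
          (Set.Icc (0:ℝ) 1) :=
        (continuous_const.mul hc2).continuousOn.div
          (continuous_const.add (continuous_const.mul hc1)).continuousOn
          (fun y hy => (lt_of_lt_of_le hexp_pos (hDlow t ht y hy)).ne')
      exact this
    · rw [hgderiv2 s, hgderiv s]
      have : ContinuousOn (fun x => ((1 - s) * deriv (deriv f) x) / (s + (1 - s) * deriv f x))
          (Set.Icc (0:ℝ) 1) :=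
        (continuous_const.mul hc2).continuousOn.div
          (continuous_const.add (continuous_const.mul hc1)).continuousOn
          (fun y hy => (lt_of_lt_of_le hexp_pos (hDlow s hs y hy)).ne')
      exact this
  have hintg2 : IntervalIntegrable
      (fun x => |deriv (deriv f) x / deriv f x| * (Real.exp (2 * M) * |t - s|))
      MeasureTheory.volume 0 1 := habs_intg.mul_const _
  calc (∫ x in (0:ℝ)..1,
          |deriv (deriv (g t)) x / deriv (g t) x - deriv (deriv (g s)) x / deriv (g s) x|)
      ≤ ∫ x in (0:ℝ)..1, |deriv (deriv f) x / deriv f x| * (Real.exp (2 * M) * |t - s|) :=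
        intervalIntegral.integral_mono_on (by norm_num) hintg1 hintg2 hpt
    _ = (∫ x in (0:ℝ)..1, |deriv (deriv f) x / deriv f x|) * (Real.exp (2 * M) * |t - s|) :=
        intervalIntegral.integral_mul_const _ _
    _ ≤ M * (Real.exp (2 * M) * |t - s|) := mul_le_mul_of_nonneg_right hint habs_ts
    _ = M * Real.exp (2 * M) * |t - s| := by ring
end

section
/- Let f : ℝ → ℝ be a C^1 circle lift and M ≥ 0 with |log(deriv f x)| ≤ M for all x ∈ ℝ. For t ∈ [0,1], define g_t : ℝ → ℝ by g_t x = t·x + (1−t)·(f x). Then each g_t is a C^1 circle lift (g_t is continuously differentiable, g_t(x+1) = g_t(x) + 1 for all x, and deriv g_t x > 0 for all x), and for all s, t ∈ [0,1], sup_{x ∈ ℝ} |log(deriv g_t x) − log(deriv g_s x)| ≤ (exp M − 1) · |t − s|. -/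
private lemma log_sub_log_le_aux {a b m : ℝ} (ha : m ≤ a) (hb : m ≤ b) (hm : 0 < m) :
    Real.log a - Real.log b ≤ |a - b| / m := by
  have ha0 : 0 < a := lt_of_lt_of_le hm ha
  have hb0 : 0 < b := lt_of_lt_of_le hm hb
  have h1 : Real.log a - Real.log b = Real.log (a / b) := (Real.log_div ha0.ne' hb0.ne').symm
  rw [h1]
  calc Real.log (a / b) ≤ a / b - 1 := Real.log_le_sub_one_of_pos (div_pos ha0 hb0)
    _ = (a - b) / b := by field_simp
    _ ≤ |a - b| / b := by gcongr ?_ / _; exact le_abs_self _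
    _ ≤ |a - b| / m := by gcongr

private lemma abs_log_sub_log_le {a b m : ℝ} (ha : m ≤ a) (hb : m ≤ b) (hm : 0 < m) :
    |Real.log a - Real.log b| ≤ |a - b| / m := by
  rw [abs_sub_le_iff]
  refine ⟨log_sub_log_le_aux ha hb hm, ?_⟩
  have := log_sub_log_le_aux hb ha hm
  rwa [abs_sub_comm] at this

/-- The interpolation estimate in the appendix theorem: the straight-line path from a
C¹ circle lift f to the identity moves with controlled speed in the pseudometric
d(f,g) = sup |log f' − log g'|. -/
theorem circle_interpolation_log_deriv_estimate
    (f : ℝ → ℝ) (hf : ContDiff ℝ 1 f)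
    (hlift : ∀ x : ℝ, f (x + 1) = f x + 1)
    (hpos : ∀ x : ℝ, 0 < deriv f x)
    (M : ℝ) (hM : 0 ≤ M)
    (hbd : ∀ x : ℝ, |Real.log (deriv f x)| ≤ M)
    (g : ℝ → ℝ → ℝ)
    (hg : ∀ t x : ℝ, g t x = t * x + (1 - t) * f x) :
    (∀ t ∈ Set.Icc (0:ℝ) 1,
        ContDiff ℝ 1 (g t) ∧ (∀ x : ℝ, g t (x + 1) = g t x + 1) ∧
        ∀ x : ℝ, 0 < deriv (g t) x) ∧
      ∀ s ∈ Set.Icc (0:ℝ) 1, ∀ t ∈ Set.Icc (0:ℝ) 1,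
        (⨆ x : ℝ, |Real.log (deriv (g t) x) - Real.log (deriv (g s) x)|) ≤
          (Real.exp M - 1) * |t - s| := by
  have hfd : Differentiable ℝ f := hf.differentiable one_ne_zero
  have hgt : ∀ t : ℝ, g t = fun x => t * x + (1 - t) * f x := fun t => funext (hg t)
  have hderiv : ∀ t x : ℝ, deriv (g t) x = t + (1 - t) * deriv f x := by
    intro t x
    have h1 : HasDerivAt (fun x => t * x + (1 - t) * f x) (t * 1 + (1 - t) * deriv f x) x :=
      ((hasDerivAt_id x).const_mul t).add ((hfd x).hasDerivAt.const_mul (1 - t))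
    rw [hgt t]
    simpa using h1.deriv
  -- bounds on deriv f
  have hlb : ∀ x : ℝ, Real.exp (-M) ≤ deriv f x := by
    intro x
    have := (abs_le.1 (hbd x)).1
    calc Real.exp (-M) ≤ Real.exp (Real.log (deriv f x)) := Real.exp_le_exp.2 (by linarith)
      _ = deriv f x := Real.exp_log (hpos x)
  have hub : ∀ x : ℝ, deriv f x ≤ Real.exp M := by
    intro x
    have := (abs_le.1 (hbd x)).2
    calc deriv f x = Real.exp (Real.log (deriv f x)) := (Real.exp_log (hpos x)).symm
      _ ≤ Real.exp M := Real.exp_le_exp.2 this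
  have hexp1 : (1:ℝ) ≤ Real.exp M := Real.one_le_exp hM
  have hexpmul : Real.exp M * Real.exp (-M) = 1 := by
    rw [← Real.exp_add]; simp
  have hdposg : ∀ t ∈ Set.Icc (0:ℝ) 1, ∀ x : ℝ, 0 < deriv (g t) x := by
    intro t ht x
    rw [hderiv]
    rcases eq_or_lt_of_le ht.1 with h | h
    · simp [← h, hpos x]
    · have h2 : 0 ≤ (1 - t) * deriv f x := mul_nonneg (by linarith [ht.2]) (hpos x).le
      linarith
  constructor
  · intro t ht
    refine ⟨?_, ?_, hdposg t ht⟩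
    · rw [hgt t]
      exact (contDiff_const.mul contDiff_id).add (contDiff_const.mul hf)
    · intro x
      rw [hg, hg, hlift]; ring
  · intro s hs t ht
    have hnn : 0 ≤ (Real.exp M - 1) * |t - s| :=
      mul_nonneg (by linarith) (abs_nonneg _)
    refine Real.iSup_le (fun x => ?_) hnn
    set c := deriv f x with hc
    have hc0 : 0 < c := hpos x
    have hclb : Real.exp (-M) ≤ c := hlb x
    have hcub : c ≤ Real.exp M := hub x
    rw [hderiv, hderiv]
    have hab : (t + (1 - t) * c) - (s + (1 - s) * c) = (t - s) * (1 - c) := by ring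
    rcases le_or_gt c 1 with h1 | h1
    · -- min bound is c
      have ha : c ≤ t + (1 - t) * c := by nlinarith [ht.1, ht.2]
      have hb : c ≤ s + (1 - s) * c := by nlinarith [hs.1, hs.2]
      have key := abs_log_sub_log_le ha hb hc0
      have h2 : |(t + (1 - t) * c) - (s + (1 - s) * c)| = |t - s| * (1 - c) := by
        rw [hab, abs_mul, abs_of_nonneg (by linarith : (0:ℝ) ≤ 1 - c)]
      rw [h2] at key
      have h3 : |t - s| * (1 - c) / c ≤ (Real.exp M - 1) * |t - s| := by
        rw [div_le_iff₀ hc0]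
        have h4 : 1 ≤ Real.exp M * c := by
          calc (1:ℝ) = Real.exp M * Real.exp (-M) := hexpmul.symm
            _ ≤ Real.exp M * c := by gcongr
        nlinarith [abs_nonneg (t - s)]
      linarith
    · -- min bound is 1
      have ha : (1:ℝ) ≤ t + (1 - t) * c := by nlinarith [ht.1, ht.2]
      have hb : (1:ℝ) ≤ s + (1 - s) * c := by nlinarith [hs.1, hs.2]
      have key := abs_log_sub_log_le ha hb one_pos
      have h2 : |(t + (1 - t) * c) - (s + (1 - s) * c)| = |t - s| * (c - 1) := by
        rw [hab, abs_mul, abs_of_nonpos (by linarith : 1 - c ≤ (0:ℝ))]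
        ring
      rw [h2, div_one] at key
      have h3 : |t - s| * (c - 1) ≤ (Real.exp M - 1) * |t - s| := by
        nlinarith [abs_nonneg (t - s)]
      linarith
end

section
/- Let f, g : ℝ → ℝ be C^1 circle lifts, and define h : ℝ → ℝ by h x = log(deriv f x) − log(deriv g x). Then sup_{x ∈ [0,1]} |h x − h 0| ≤ 2 · sup_{x ∈ [0,1]} |h x|, and sup_{x ∈ [0,1]} |h x| ≤ 2 · sup_{x ∈ [0,1]} |h x − h 0|. -/
/-- Bi-Lipschitz equivalence of the pseudometric d(f,g) = sup|log f' − log g'| and the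
metric σ(f,g) = sup|(log f' − log f'(0)) − (log g' − log g'(0))| on Diff¹₊(S¹). -/
theorem log_deriv_sup_biLipschitz
    (f g : ℝ → ℝ) (hf : ContDiff ℝ 1 f) (hg : ContDiff ℝ 1 g)
    (hliftf : ∀ x : ℝ, f (x + 1) = f x + 1)
    (hliftg : ∀ x : ℝ, g (x + 1) = g x + 1)
    (hposf : ∀ x : ℝ, 0 < deriv f x)
    (hposg : ∀ x : ℝ, 0 < deriv g x)
    (h : ℝ → ℝ)
    (hh : ∀ x : ℝ, h x = Real.log (deriv f x) - Real.log (deriv g x)) :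
    (⨆ x : Set.Icc (0:ℝ) 1, |h x - h 0|) ≤ 2 * ⨆ x : Set.Icc (0:ℝ) 1, |h x| ∧
      (⨆ x : Set.Icc (0:ℝ) 1, |h x|) ≤ 2 * ⨆ x : Set.Icc (0:ℝ) 1, |h x - h 0| := by
  have hdf : Continuous (deriv f) := hf.continuous_deriv le_rfl
  have hdg : Continuous (deriv g) := hg.continuous_deriv le_rfl
  -- continuity of h
  have hch : Continuous h := by
    have h1 : Continuous fun x => Real.log (deriv f x) := by
      rw [continuous_iff_continuousAt]
      exact fun x => (Real.continuousAt_log (hposf x).ne').comp hdf.continuousAt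
    have h2 : Continuous fun x => Real.log (deriv g x) := by
      rw [continuous_iff_continuousAt]
      exact fun x => (Real.continuousAt_log (hposg x).ne').comp hdg.continuousAt
    have : Continuous fun x => Real.log (deriv f x) - Real.log (deriv g x) := h1.sub h2
    convert this using 1
    funext x; exact hh x
  -- boundedness of the two sup families
  have bdd1 : BddAbove (Set.range fun x : Set.Icc (0:ℝ) 1 => |h x - h 0|) := by
    have : Continuous fun x : Set.Icc (0:ℝ) 1 => |h x - h 0| :=
      (((hch.comp continuous_subtype_val).sub continuous_const).abs)
    exact (isCompact_range this).bddAbove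
  have bdd2 : BddAbove (Set.range fun x : Set.Icc (0:ℝ) 1 => |h x|) := by
    have : Continuous fun x : Set.Icc (0:ℝ) 1 => |h x| :=
      ((hch.comp continuous_subtype_val).abs)
    exact (isCompact_range this).bddAbove
  have h0mem : (0:ℝ) ∈ Set.Icc (0:ℝ) 1 := by constructor <;> norm_num
  -- existence of a zero of h on [0,1]
  have hintf : ∫ x in (0:ℝ)..1, deriv f x = 1 := by
    rw [intervalIntegral.integral_deriv_eq_sub
      (fun x _ => (hf.differentiable one_ne_zero).differentiableAt) (hdf.intervalIntegrable 0 1)]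
    have := hliftf 0
    simp only [zero_add] at this
    rw [this]; ring
  have hintg : ∫ x in (0:ℝ)..1, deriv g x = 1 := by
    rw [intervalIntegral.integral_deriv_eq_sub
      (fun x _ => (hg.differentiable one_ne_zero).differentiableAt) (hdg.intervalIntegrable 0 1)]
    have := hliftg 0
    simp only [zero_add] at this
    rw [this]; ring
  set φ : ℝ → ℝ := fun x => deriv f x - deriv g x with hφ
  have hcφ : Continuous φ := hdf.sub hdg
  have hintφ : ∫ x in (0:ℝ)..1, φ x = 0 := by
    rw [hφ]
    rw [intervalIntegral.integral_sub (hdf.intervalIntegrable 0 1) (hdg.intervalIntegrable 0 1),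
      hintf, hintg]
    ring
  have hzero : ∃ x₀ ∈ Set.Icc (0:ℝ) 1, φ x₀ = 0 := by
    by_contra hc
    push_neg at hc
    -- φ has constant sign on [0,1]
    have hsign : (∀ x ∈ Set.Icc (0:ℝ) 1, 0 < φ x) ∨ (∀ x ∈ Set.Icc (0:ℝ) 1, φ x < 0) := by
      by_contra hs
      push_neg at hs
      obtain ⟨⟨a, ha, hfa⟩, ⟨b, hb, hfb⟩⟩ := hs
      have ha' : φ a < 0 := lt_of_le_of_ne hfa (hc a ha)
      have hb' : 0 < φ b := lt_of_le_of_ne hfb (Ne.symm (hc b hb))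
      have : (0:ℝ) ∈ φ '' Set.uIcc a b := by
        apply intermediate_value_uIcc (hcφ.continuousOn)
        rw [Set.mem_uIcc]
        left; exact ⟨ha'.le, hb'.le⟩
      obtain ⟨c, hcmem, hc0⟩ := this
      have : c ∈ Set.Icc (0:ℝ) 1 := by
        rcases Set.mem_uIcc.mp hcmem with hcc | hcc
        · exact ⟨le_trans ha.1 hcc.1, le_trans hcc.2 hb.2⟩
        · exact ⟨le_trans hb.1 hcc.1, le_trans hcc.2 ha.2⟩
      exact hc c this hc0
    rcases hsign with hp | hn
    · have : 0 < ∫ x in (0:ℝ)..1, φ x :=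
        intervalIntegral.intervalIntegral_pos_of_pos_on (hcφ.intervalIntegrable 0 1)
          (fun x hx => hp x ⟨hx.1.le, hx.2.le⟩) one_pos
      rw [hintφ] at this; exact lt_irrefl 0 this
    · have : 0 < ∫ x in (0:ℝ)..1, -φ x :=
        intervalIntegral.intervalIntegral_pos_of_pos_on ((hcφ.neg).intervalIntegrable 0 1)
          (fun x hx => neg_pos.mpr (hn x ⟨hx.1.le, hx.2.le⟩)) one_pos
      rw [intervalIntegral.integral_neg, hintφ, neg_zero] at this
      exact lt_irrefl 0 this
  obtain ⟨x₀, hx₀mem, hx₀⟩ := hzero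
  have hhx₀ : h x₀ = 0 := by
    have : deriv f x₀ = deriv g x₀ := by
      have := hx₀; simp only [hφ] at this; linarith
    rw [hh x₀, this, sub_self]
  constructor
  · apply ciSup_le
    intro x
    have l1 : |h x| ≤ ⨆ y : Set.Icc (0:ℝ) 1, |h y| := le_ciSup bdd2 x
    have l2 : |h 0| ≤ ⨆ y : Set.Icc (0:ℝ) 1, |h y| := le_ciSup bdd2 ⟨0, h0mem⟩
    calc |h x - h 0| ≤ |h x| + |h 0| := abs_sub _ _
      _ ≤ _ := by linarith
  · apply ciSup_le
    intro x
    have l1 : |h x - h 0| ≤ ⨆ y : Set.Icc (0:ℝ) 1, |h y - h 0| := le_ciSup bdd1 x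
    have l2 : |h 0| ≤ ⨆ y : Set.Icc (0:ℝ) 1, |h y - h 0| := by
      have : |h 0| = |h x₀ - h 0| := by rw [hhx₀, zero_sub, abs_neg]
      rw [this]
      exact le_ciSup bdd1 ⟨x₀, hx₀mem⟩
    calc |h x| = |(h x - h 0) + h 0| := by ring_nf
      _ ≤ |h x - h 0| + |h 0| := abs_add_le _ _
      _ ≤ _ := by linarith
end

section
/- Let f, g : ℝ → ℝ be twice continuously differentiable with f 0 = g 0 = 0, f 1 = g 1 = 1, deriv f x > 0 and deriv g x > 0 for all x ∈ [0,1]. If deriv (deriv f) x / deriv f x = deriv (deriv g) x / deriv g x for all x ∈ [0,1], then f x = g x for all x ∈ [0,1]. -/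
/-- Injectivity of the nonlinearity map Φ(f) = f''/f' on diffeomorphisms of [0,1]. -/
theorem nonlinearity_injective_on_interval
    (f g : ℝ → ℝ) (hf : ContDiff ℝ 2 f) (hg : ContDiff ℝ 2 g)
    (hf0 : f 0 = 0) (hg0 : g 0 = 0) (hf1 : f 1 = 1) (hg1 : g 1 = 1)
    (hposf : ∀ x ∈ Set.Icc (0:ℝ) 1, 0 < deriv f x)
    (hposg : ∀ x ∈ Set.Icc (0:ℝ) 1, 0 < deriv g x)
    (heq : ∀ x ∈ Set.Icc (0:ℝ) 1,
      deriv (deriv f) x / deriv f x = deriv (deriv g) x / deriv g x) :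
    ∀ x ∈ Set.Icc (0:ℝ) 1, f x = g x := by
  have hf' : ContDiff ℝ 1 (deriv f) := by
    have := (contDiff_succ_iff_deriv (n := 1)).mp (by exact_mod_cast hf)
    exact this.2.2
  have hg' : ContDiff ℝ 1 (deriv g) := by
    have := (contDiff_succ_iff_deriv (n := 1)).mp (by exact_mod_cast hg)
    exact this.2.2
  have hdf : Differentiable ℝ (deriv f) := hf'.differentiable one_ne_zero
  have hdg : Differentiable ℝ (deriv g) := hg'.differentiable one_ne_zero
  set φ : ℝ → ℝ := fun x => Real.log (deriv f x) - Real.log (deriv g x) with hφ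
  have hφderiv : ∀ x ∈ Set.Icc (0:ℝ) 1, HasDerivAt φ 0 x := by
    intro x hx
    have hfx := hposf x hx
    have hgx := hposg x hx
    have h1 : HasDerivAt (fun y => Real.log (deriv f y))
        ((deriv f x)⁻¹ * deriv (deriv f) x) x :=
      (Real.hasDerivAt_log hfx.ne').comp x (hdf x).hasDerivAt
    have h2 : HasDerivAt (fun y => Real.log (deriv g y))
        ((deriv g x)⁻¹ * deriv (deriv g) x) x :=
      (Real.hasDerivAt_log hgx.ne').comp x (hdg x).hasDerivAt
    have h3 := h1.sub h2
    have h4 : (deriv f x)⁻¹ * deriv (deriv f) x - (deriv g x)⁻¹ * deriv (deriv g) x = 0 := by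
      have := heq x hx
      rw [div_eq_div_iff hfx.ne' hgx.ne'] at this
      field_simp
      linarith
    rwa [h4] at h3
  have hφconst : ∀ x ∈ Set.Icc (0:ℝ) 1, φ x = φ 0 := by
    apply constant_of_has_deriv_right_zero
    · intro x hx
      exact (hφderiv x hx).continuousAt.continuousWithinAt
    · intro x hx
      exact (hφderiv x (Set.mem_Icc_of_Ico hx)).hasDerivWithinAt
  set c : ℝ := deriv f 0 / deriv g 0 with hc
  have h01 : (0:ℝ) ∈ Set.Icc (0:ℝ) 1 := by constructor <;> norm_num
  have hratio : ∀ x ∈ Set.Icc (0:ℝ) 1, deriv f x = c * deriv g x := by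
    intro x hx
    have hfx := hposf x hx
    have hgx := hposg x hx
    have hf0p := hposf 0 h01
    have hg0p := hposg 0 h01
    have := hφconst x hx
    have hlog : Real.log (deriv f x / deriv g x) = Real.log (deriv f 0 / deriv g 0) := by
      rw [Real.log_div hfx.ne' hgx.ne', Real.log_div hf0p.ne' hg0p.ne']
      exact this
    have := Real.log_injOn_pos (Set.mem_Ioi.mpr (div_pos hfx hgx))
      (Set.mem_Ioi.mpr (div_pos hf0p hg0p)) hlog
    rw [div_eq_div_iff hgx.ne' hg0p.ne'] at this
    rw [hc]
    field_simp
    linarith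
  set F : ℝ → ℝ := fun x => f x - c * g x with hF
  have hFderiv : ∀ x ∈ Set.Icc (0:ℝ) 1, HasDerivAt F 0 x := by
    intro x hx
    have h1 : HasDerivAt F (deriv f x - c * deriv g x) x :=
      ((hf.differentiable (by norm_num) x).hasDerivAt).sub
        (((hg.differentiable (by norm_num) x).hasDerivAt).const_mul c)
    have h2 : deriv f x - c * deriv g x = 0 := by rw [hratio x hx]; ring
    rwa [h2] at h1
  have hFconst : ∀ x ∈ Set.Icc (0:ℝ) 1, F x = F 0 := by
    apply constant_of_has_deriv_right_zero
    · intro x hx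
      exact (hFderiv x hx).continuousAt.continuousWithinAt
    · intro x hx
      exact (hFderiv x (Set.mem_Icc_of_Ico hx)).hasDerivWithinAt
  have hF0 : F 0 = 0 := by simp [hF, hf0, hg0]
  have h11 : (1:ℝ) ∈ Set.Icc (0:ℝ) 1 := by constructor <;> norm_num
  have hc1 : c = 1 := by
    have := hFconst 1 h11
    rw [hF0] at this
    simp [hF, hf1, hg1] at this
    linarith
  intro x hx
  have := hFconst x hx
  rw [hF0] at this
  simp [hF, hc1] at this
  linarith
end

section
/- Let H : ℝ → ℝ be continuous. Define F x = ∫_0^x H t dt, C = ∫_0^1 exp(F t) dt, and f x = C⁻¹ · ∫_0^x exp(F t) dt. Then: (i) f 0 = 0 and f 1 = 1; (ii) f is twice continuously differentiable with deriv f x = exp(F x)/C > 0 for all x; (iii) deriv (deriv f) x / deriv f x = H x for all x; and (iv) if ∫_0^1 H t dt = 0, then deriv f 0 = deriv f 1. -/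
open intervalIntegral

/-- Surjectivity of the nonlinearity map: every continuous H is the nonlinearity f''/f'
of an orientation-preserving diffeomorphism f of [0,1], and ∫₀¹ H = 0 forces
f'(0) = f'(1). -/
theorem nonlinearity_surjective
    (H : ℝ → ℝ) (hH : Continuous H)
    (F : ℝ → ℝ) (hF : ∀ x : ℝ, F x = ∫ t in (0:ℝ)..x, H t)
    (C : ℝ) (hC : C = ∫ t in (0:ℝ)..1, Real.exp (F t))
    (f : ℝ → ℝ) (hf : ∀ x : ℝ, f x = C⁻¹ * ∫ t in (0:ℝ)..x, Real.exp (F t)) :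
    f 0 = 0 ∧ f 1 = 1 ∧
    ContDiff ℝ 2 f ∧
    (∀ x : ℝ, deriv f x = Real.exp (F x) / C ∧ 0 < deriv f x) ∧
    (∀ x : ℝ, deriv (deriv f) x / deriv f x = H x) ∧
    ((∫ t in (0:ℝ)..1, H t) = 0 → deriv f 0 = deriv f 1) := by
  have hFeq : F = fun x => ∫ t in (0:ℝ)..x, H t := funext hF
  have hFd : ∀ x : ℝ, HasDerivAt F (H x) x := by
    intro x
    rw [hFeq]
    exact (hH.integral_hasStrictDerivAt 0 x).hasDerivAt
  have hFcont : Continuous F := by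
    apply continuous_iff_continuousAt.2
    exact fun x => (hFd x).continuousAt
  have hFc1 : ContDiff ℝ 1 F := by
    rw [contDiff_one_iff_deriv]
    constructor
    · exact fun x => (hFd x).differentiableAt
    · have : deriv F = H := funext fun x => (hFd x).deriv
      rw [this]; exact hH
  have hg : Continuous fun t => Real.exp (F t) := Real.continuous_exp.comp hFcont
  have hC0 : 0 < C := by
    rw [hC]
    apply intervalIntegral.intervalIntegral_pos_of_pos_on (hg.intervalIntegrable 0 1)
    · exact fun x _ => Real.exp_pos _
    · norm_num
  have hfeq : f = fun x => C⁻¹ * ∫ t in (0:ℝ)..x, Real.exp (F t) := funext hf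
  have hfd : ∀ x : ℝ, HasDerivAt f (Real.exp (F x) / C) x := by
    intro x
    rw [hfeq]
    have := ((hg.integral_hasStrictDerivAt 0 x).hasDerivAt).const_mul C⁻¹
    convert this using 1
    · rfl
    · rfl
    · field_simp
  have hderiv : deriv f = fun x => Real.exp (F x) / C := funext fun x => (hfd x).deriv
  have hEd : ∀ x : ℝ, HasDerivAt (fun x => Real.exp (F x) / C) (H x * Real.exp (F x) / C) x := by
    intro x
    have := ((hFd x).exp).div_const C
    convert this using 1
    · rfl
    · rfl
    · ring
  refine ⟨?_, ?_, ?_, ?_, ?_, ?_⟩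
  · simp [hf]
  · rw [hf, ← hC]
    field_simp
  · rw [hfeq]
    apply ContDiff.mul contDiff_const
    rw [show (2 : WithTop ℕ∞) = 1 + 1 from rfl, contDiff_succ_iff_deriv]
    refine ⟨?_, by simp, ?_⟩
    · exact fun x => ((hg.integral_hasStrictDerivAt 0 x).hasDerivAt).differentiableAt
    · have : deriv (fun x => ∫ t in (0:ℝ)..x, Real.exp (F t)) = fun x => Real.exp (F x) := by
        funext x
        exact ((hg.integral_hasStrictDerivAt 0 x).hasDerivAt).deriv
      rw [this]
      exact (Real.contDiff_exp.comp hFc1 : ContDiff ℝ 1 _)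
  · intro x
    refine ⟨(hfd x).deriv, ?_⟩
    rw [(hfd x).deriv]
    positivity
  · intro x
    rw [hderiv, (hEd x).deriv]
    simp only
    field_simp
  · intro h0
    rw [hderiv]
    simp only
    have h1 : F 1 = 0 := by rw [hF]; exact h0
    have h0' : F 0 = 0 := by rw [hF]; simp
    rw [h0', h1]
end

section
/- Let f, g : ℝ → ℝ be C^2 circle lifts. If deriv (deriv f) x / deriv f x = deriv (deriv g) x / deriv g x for all x ∈ ℝ, then there exists a constant c ∈ ℝ such that f x = g x + c for all x ∈ ℝ. -/
/-- Kernel computation in Lemma 4.1: two circle lifts with equal nonlinearity f''/f'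
differ by a constant (a rigid rotation). -/
theorem eq_nonlinearity_implies_rotation
    (f g : ℝ → ℝ) (hf : ContDiff ℝ 2 f) (hg : ContDiff ℝ 2 g)
    (hliftf : ∀ x : ℝ, f (x + 1) = f x + 1)
    (hliftg : ∀ x : ℝ, g (x + 1) = g x + 1)
    (hposf : ∀ x : ℝ, 0 < deriv f x)
    (hposg : ∀ x : ℝ, 0 < deriv g x)
    (heq : ∀ x : ℝ,
      deriv (deriv f) x / deriv f x = deriv (deriv g) x / deriv g x) :
    ∃ c : ℝ, ∀ x : ℝ, f x = g x + c := by
  have hdf : Differentiable ℝ (deriv f) :=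
    (contDiff_succ_iff_deriv.mp (hf.of_le (by norm_num : (1:WithTop ℕ∞)+1 ≤ 2))).2.2.differentiable one_ne_zero
  have hdg : Differentiable ℝ (deriv g) :=
    (contDiff_succ_iff_deriv.mp (hg.of_le (by norm_num : (1:WithTop ℕ∞)+1 ≤ 2))).2.2.differentiable one_ne_zero
  have hfd : Differentiable ℝ f := hf.differentiable (by norm_num)
  have hgd : Differentiable ℝ g := hg.differentiable (by norm_num)
  -- cross-multiplied equality
  have hcross : ∀ x, deriv (deriv f) x * deriv g x = deriv (deriv g) x * deriv f x := by
    intro x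
    have := heq x
    field_simp [(hposf x).ne', (hposg x).ne'] at this
    linarith
  set u : ℝ → ℝ := fun x => deriv f x / deriv g x with hu
  have hud : ∀ x, HasDerivAt u 0 x := by
    intro x
    have h := ((hdf x).hasDerivAt.div (hdg x).hasDerivAt (hposg x).ne')
    have : (deriv (deriv f) x * deriv g x - deriv f x * deriv (deriv g) x) /
        deriv g x ^ 2 = 0 := by
      rw [hcross x]; ring_nf
    rwa [this] at h
  have hconst : ∀ x, u x = u 0 := by
    intro x
    exact is_const_of_deriv_eq_zero (fun y => (hud y).differentiableAt)
      (fun y => (hud y).deriv) x 0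
  set k := u 0 with hk
  have hderiv : ∀ x, deriv f x = k * deriv g x := by
    intro x
    have := hconst x
    simp only [hu] at this
    field_simp [(hposg x).ne'] at this
    linarith [this]
  -- f - k*g constant
  set F : ℝ → ℝ := fun x => f x - k * g x with hF
  have hFd : ∀ x, HasDerivAt F 0 x := by
    intro x
    have h := (hfd x).hasDerivAt.sub (((hgd x).hasDerivAt).const_mul k)
    rwa [hderiv x, sub_self] at h
  have hFc : ∀ x, F x = F 0 := fun x =>
    is_const_of_deriv_eq_zero (fun y => (hFd y).differentiableAt)
      (fun y => (hFd y).deriv) x 0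
  have hk1 : k = 1 := by
    have h1 := hFc 1
    have hf1 : f 1 = f 0 + 1 := by simpa using hliftf 0
    have hg1 : g 1 = g 0 + 1 := by simpa using hliftg 0
    simp only [hF, hf1, hg1] at h1
    linarith
  refine ⟨f 0 - g 0, fun x => ?_⟩
  have := hFc x
  simp only [hF, hk1, one_mul] at this
  linarith
end
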